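/- arXiv:2209.02635 — 7 statements merged into one kernel-verified Lean document; each statement's English description precedes it below -/
import Mathlib

section
/- Let N ≥ 1, let u ∈ ℝ^N have at least one nonzero entry, and let F : ℝ^N_{++} → ℝ^N_{++} be continuously differentiable. Assume that F connects all variables, that F scales with exponent u, and that the monotonicity behavior of F is consistent with u. If the fixed point equation x = F(x) has a solution x* ∈ ℝ^N_{++}, then the set of solutions of x = F(x) in ℝ^N_{++} is exactly { c^u x* : c ∈ (0,∞) }. -/
open Filter

/-- The positive orthant `ℝ^N_{++}`: vectors all of whose entries are strictly positive. -/
def PosOrth (N : ℕ) : Set (Fin N → ℝ) := {x | ∀ i, 0 < x i}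

/-- The Jacobian matrix of `F` at `x`: entry `(j, k)` is `∂F_j(x)/∂x_k`. -/
noncomputable def Jac {N : ℕ} (F : (Fin N → ℝ) → (Fin N → ℝ)) (x : Fin N → ℝ) :
    Matrix (Fin N) (Fin N) ℝ :=
  Matrix.of fun j k => fderiv ℝ F x (Pi.single k 1) j

/-- A matrix is irreducible if the directed graph on `Fin N` with an edge from `k` to `j`
whenever `M j k ≠ 0` is strongly connected. -/
def MatIrred {N : ℕ} (M : Matrix (Fin N) (Fin N) ℝ) : Prop :=
  ∀ a b : Fin N, Relation.TransGen (fun k j => M j k ≠ 0) a b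

/-- `pscale c u x = c^u x`, i.e. the vector with entries `c ^ (u i) * x i`. -/
noncomputable def pscale {N : ℕ} (c : ℝ) (u x : Fin N → ℝ) : Fin N → ℝ :=
  fun i => c ^ u i * x i

/-- The monotonicity behavior of `F` is consistent with `u`: there is a partition of the
index set into `ζ_+` (where `ζ = true`) and `ζ_-` (where `ζ = false`) such that `u` is
nonnegative on `ζ_+`, nonpositive on `ζ_-`, and on the positive orthant all partial
derivatives `∂F_j/∂x_k` are nonnegative when `j, k` lie in the same set of the partition
and nonpositive otherwise. -/
def MonoConsistent {N : ℕ} (F : (Fin N → ℝ) → (Fin N → ℝ)) (u : Fin N → ℝ) : Prop :=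
  ∃ ζ : Fin N → Bool,
    (∀ j, ζ j = true → 0 ≤ u j) ∧ (∀ j, ζ j = false → u j ≤ 0) ∧
    ∀ x ∈ PosOrth N, ∀ j k : Fin N,
      (ζ j = ζ k → 0 ≤ Jac F x j k) ∧ (ζ j ≠ ζ k → Jac F x j k ≤ 0)

lemma isOpen_posOrth (N : ℕ) : IsOpen (PosOrth N) := by
  have : PosOrth N = ⋂ i, (fun x : Fin N → ℝ => x i) ⁻¹' Set.Ioi 0 := by
    ext x; simp [PosOrth, Set.mem_iInter]
  rw [this]
  exact isOpen_iInter_of_finite fun i => isOpen_Ioi.preimage (continuous_apply i)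

lemma fderiv_eval {N : ℕ} (F : (Fin N → ℝ) → (Fin N → ℝ)) (x w : Fin N → ℝ) (j : Fin N) :
    fderiv ℝ F x w j = ∑ k, Jac F x j k * w k := by
  have hw : w = ∑ k : Fin N, w k • (Pi.single k 1 : Fin N → ℝ) := by
    funext i
    simp [Finset.sum_apply, Pi.single_apply]
  conv_lhs => rw [hw]
  rw [map_sum]
  simp only [map_smul]
  rw [Finset.sum_apply]
  exact Finset.sum_congr rfl fun k _ => by
    simp [Jac, mul_comm]

lemma pscale_one {N : ℕ} (u x : Fin N → ℝ) : pscale 1 u x = x := by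
  funext i; simp [pscale, Real.one_rpow]

lemma hasDerivAt_pscale {N : ℕ} (u x : Fin N → ℝ) :
    HasDerivAt (fun c => pscale c u x) (fun i => u i * x i) 1 := by
  rw [hasDerivAt_pi]
  intro i
  have h := (Real.hasDerivAt_rpow_const (x := (1:ℝ)) (p := u i) (Or.inl one_ne_zero)).mul_const (x i)
  simpa [pscale, Real.one_rpow] using h

lemma eigen {N : ℕ} (u : Fin N → ℝ) (F : (Fin N → ℝ) → (Fin N → ℝ))
    (hC1 : ContDiffOn ℝ 1 F (PosOrth N))
    (hscale : ∀ x ∈ PosOrth N, ∀ c : ℝ, 0 < c → F (pscale c u x) = pscale c u (F x))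
    (x : Fin N → ℝ) (hx : x ∈ PosOrth N) (j : Fin N) :
    ∑ k, Jac F x j k * (u k * x k) = u j * F x j := by
  have hdF : DifferentiableAt ℝ F x :=
    (hC1.differentiableOn one_ne_zero).differentiableAt ((isOpen_posOrth N).mem_nhds hx)
  have h1 : HasDerivAt (fun c => pscale c u x) (fun i => u i * x i) 1 := hasDerivAt_pscale u x
  have h2 : HasDerivAt (fun c => F (pscale c u x)) (fderiv ℝ F x (fun i => u i * x i)) 1 := by
    have hF : HasFDerivAt F (fderiv ℝ F x) (pscale 1 u x) := by
      rw [pscale_one]; exact hdF.hasFDerivAt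
    exact hF.comp_hasDerivAt 1 h1
  have h3 : (fun c => pscale c u (F x)) =ᶠ[nhds (1:ℝ)] (fun c => F (pscale c u x)) := by
    filter_upwards [eventually_gt_nhds (show (0:ℝ) < 1 by norm_num)] with c hc
    exact (hscale x hx c hc).symm
  have h2' : HasDerivAt (fun c => pscale c u (F x)) (fderiv ℝ F x (fun i => u i * x i)) 1 :=
    h2.congr_of_eventuallyEq h3
  have h4 : HasDerivAt (fun c => pscale c u (F x)) (fun i => u i * F x i) 1 :=
    hasDerivAt_pscale u (F x)
  have hU := h2'.unique h4
  calc ∑ k, Jac F x j k * (u k * x k) = fderiv ℝ F x (fun i => u i * x i) j :=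
        (fderiv_eval F x _ j).symm
    _ = u j * F x j := by rw [hU]

/-- **Main theorem, part (i) (up-to-scale uniqueness).**
If `F : ℝ^N_{++} → ℝ^N_{++}` is continuously differentiable, connects all variables,
scales with exponent `u ≠ 0`, its monotonicity behavior is consistent with `u`, and the
fixed point equation `x = F(x)` has a solution `x* ∈ ℝ^N_{++}`, then the solutions of
`x = F(x)` in `ℝ^N_{++}` are exactly the vectors `c^u x*` for `c ∈ (0, ∞)`. -/
theorem uniqueness_up_to_scale
    {N : ℕ} (hN : 1 ≤ N) (u : Fin N → ℝ) (hu : u ≠ 0)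
    (F : (Fin N → ℝ) → (Fin N → ℝ))
    (hmap : ∀ x ∈ PosOrth N, F x ∈ PosOrth N)
    (hC1 : ContDiffOn ℝ 1 F (PosOrth N))
    (hconn : ∀ x ∈ PosOrth N, MatIrred (Matrix.of fun j k => |Jac F x j k|))
    (hscale : ∀ x ∈ PosOrth N, ∀ c : ℝ, 0 < c → F (pscale c u x) = pscale c u (F x))
    (hmono : MonoConsistent F u)
    (xstar : Fin N → ℝ) (hxstar : xstar ∈ PosOrth N) (hfix : F xstar = xstar) :
    {x | x ∈ PosOrth N ∧ F x = x} =
      {x | ∃ c : ℝ, 0 < c ∧ x = pscale c u xstar} := by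
  obtain ⟨ζ, hζp, hζm, hζJ⟩ := hmono
  set σ : Fin N → ℝ := fun j => if ζ j then 1 else -1 with hσ
  have hσsq : ∀ j, σ j * σ j = 1 := by intro j; by_cases h : ζ j <;> simp [hσ, h]
  have hσne : ∀ j, σ j ≠ 0 := by intro j; by_cases h : ζ j <;> simp [hσ, h]
  have hσu : ∀ j, 0 ≤ σ j * u j := by
    intro j
    by_cases h : ζ j
    · simpa [hσ, h] using hζp j h
    · have hf : ζ j = false := by simpa using h
      have := hζm j hf
      simp only [hσ, hf]
      norm_num
      linarith
  have hB : ∀ x ∈ PosOrth N, ∀ j k, 0 ≤ σ j * σ k * Jac F x j k := by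
    intro x hx j k
    by_cases hj : ζ j <;> by_cases hk : ζ k
    · have := (hζJ x hx j k).1 (by rw [hj, hk]); simp [hσ, hj, hk]; linarith
    · have := (hζJ x hx j k).2 (by simp [hj, hk]); simp [hσ, hj, hk]; linarith
    · have := (hζJ x hx j k).2 (by simp [hj, hk]); simp [hσ, hj, hk]; linarith
    · have := (hζJ x hx j k).1 (by simp [hj, hk]); simp [hσ, hj, hk]; linarith
  -- all entries of u are nonzero, with sign σ
  have hupos : ∀ j, 0 < σ j * u j := by
    have hex : ∃ b, u b ≠ 0 := by
      by_contra h; push_neg at h; exact hu (funext fun b => h b)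
    obtain ⟨b, hb⟩ := hex
    have hbpos : 0 < σ b * u b := (hσu b).lt_of_ne (by
      symm; exact mul_ne_zero (hσne b) hb)
    have heig : ∀ j, σ j * u j * xstar j = ∑ k, (σ j * σ k * Jac F xstar j k) * (σ k * u k * xstar k) := by
      intro j
      have h := eigen u F hC1 hscale xstar hxstar j
      rw [hfix] at h
      calc σ j * u j * xstar j = σ j * (u j * xstar j) := by ring
        _ = σ j * ∑ k, Jac F xstar j k * (u k * xstar k) := by rw [h]
        _ = ∑ k, (σ j * σ k * Jac F xstar j k) * (σ k * u k * xstar k) := by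
            rw [Finset.mul_sum]
            exact Finset.sum_congr rfl fun k _ => by
              linear_combination (-(σ j * Jac F xstar j k * u k * xstar k)) * hσsq k
    have step : ∀ k j, 0 < σ k * u k → Jac F xstar j k ≠ 0 → 0 < σ j * u j := by
      intro k j hk hjk
      have hsum : 0 < σ j * u j * xstar j := by
        rw [heig j]
        apply Finset.sum_pos' (fun i _ => mul_nonneg (hB xstar hxstar j i)
          (mul_nonneg (hσu i) (hxstar i).le))
        refine ⟨k, Finset.mem_univ k, mul_pos ?_ (mul_pos hk (hxstar k))⟩
        exact ((hB xstar hxstar j k).lt_of_ne (by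
          symm; exact mul_ne_zero (mul_ne_zero (hσne j) (hσne k)) hjk))
      have := hxstar j
      nlinarith
    intro a
    have h := hconn xstar hxstar b a
    induction h with
    | single e => exact step _ _ hbpos (fun h0 => e (by simp [Matrix.of_apply, h0]))
    | tail h e ih => exact step _ _ ih (fun h0 => e (by simp [Matrix.of_apply, h0]))

  have huIcc : Set.uIcc (0:ℝ) 1 = Set.Icc 0 1 := Set.uIcc_of_le zero_le_one
  ext y
  simp only [Set.mem_setOf_eq]
  constructor
  · rintro ⟨hy, hyfix⟩
    set s : Fin N → ℝ := fun j => Real.log (y j / xstar j) / u j with hs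
    obtain ⟨j0, -, hj0⟩ := Finset.exists_min_image Finset.univ s
      ⟨⟨0, by omega⟩, Finset.mem_univ _⟩
    set c : ℝ := Real.exp (s j0) with hcdef
    have hc : 0 < c := Real.exp_pos _
    refine ⟨c, hc, ?_⟩
    set z : Fin N → ℝ := pscale c u xstar with hz
    have hzpos : z ∈ PosOrth N := fun i => mul_pos (Real.rpow_pos_of_pos hc _) (hxstar i)
    have hzfix : F z = z := by rw [hz, hscale xstar hxstar c hc, hfix]
    have hune : ∀ j, u j ≠ 0 := by
      intro j h0
      have := hupos j; rw [h0, mul_zero] at this; exact lt_irrefl 0 this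
    have hzj : ∀ j, z j = Real.exp (s j0 * u j) * xstar j := by
      intro j
      show c ^ u j * xstar j = _
      rw [hcdef, Real.rpow_def_of_pos (Real.exp_pos _), Real.log_exp]
    have hyj : ∀ j, y j = Real.exp (s j * u j) * xstar j := by
      intro j
      have h1 : s j * u j = Real.log (y j / xstar j) :=
        div_mul_cancel₀ _ (hune j)
      rw [h1, Real.exp_log (div_pos (hy j) (hxstar j)),
        div_mul_cancel₀ _ (ne_of_gt (hxstar j))]
    set v : Fin N → ℝ := fun j => σ j * (y j - z j) with hv
    have hv0 : ∀ j, 0 ≤ v j := by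
      intro j
      show 0 ≤ σ j * (y j - z j)
      rw [hyj j, hzj j]
      by_cases hj : ζ j
      · have hup : 0 < u j := by
          have := hupos j; simpa [hσ, hj] using this
        have h2 : s j0 * u j ≤ s j * u j :=
          mul_le_mul_of_nonneg_right (hj0 j (Finset.mem_univ j)) hup.le
        have h3 := Real.exp_le_exp.2 h2
        simp only [hσ, hj, if_pos, one_mul]
        nlinarith [hxstar j]
      · have hf : ζ j = false := by simpa using hj
        have hup : u j < 0 := by
          have h1 := hupos j
          have h2 := hune j
          rcases lt_trichotomy (u j) 0 with h | h | h
          · exact h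
          · exact absurd h h2
          · exfalso; simp only [hσ, hf] at h1; norm_num at h1; linarith
        have h2 : s j * u j ≤ s j0 * u j :=
          mul_le_mul_of_nonpos_right (hj0 j (Finset.mem_univ j)) hup.le
        have h3 := Real.exp_le_exp.2 h2
        simp only [hσ, hf]
        norm_num
        nlinarith [hxstar j]
    have hvj0 : v j0 = 0 := by
      show σ j0 * (y j0 - z j0) = 0
      rw [hyj j0, hzj j0]; ring
    -- the segment from z to y
    set L : ℝ → (Fin N → ℝ) := fun t => fun i => z i + t * (y i - z i) with hL
    have hLmem : ∀ t ∈ Set.uIcc (0:ℝ) 1, L t ∈ PosOrth N := by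
      intro t ht i
      rw [huIcc] at ht
      obtain ⟨h0, h1⟩ := ht
      have hz1 := hzpos i; have hy1 := hy i
      show 0 < z i + t * (y i - z i)
      nlinarith [mul_nonneg h0 hy1.le, mul_nonneg (sub_nonneg.2 h1) hz1.le]
    have hLder : ∀ t : ℝ, HasDerivAt L (fun i => y i - z i) t := by
      intro t
      rw [hasDerivAt_pi]
      intro i
      exact (hasDerivAt_mul_const (x := t) (y i - z i)).const_add (z i)
    have hLcont : Continuous L := by
      apply continuous_pi
      intro i
      fun_prop
    have hL0 : L 0 = z := funext fun i => by show z i + 0 * _ = z i; ring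
    have hL1 : L 1 = y := funext fun i => by show z i + 1 * _ = y i; ring
    have hcontJ : ∀ j k, ContinuousOn (fun t => Jac F (L t) j k) (Set.uIcc (0:ℝ) 1) := by
      intro j k
      have hFc : ContinuousOn (fderiv ℝ F) (PosOrth N) :=
        hC1.continuousOn_fderiv_of_isOpen (isOpen_posOrth N) le_rfl
      have h1 : ContinuousOn (fun t => fderiv ℝ F (L t)) (Set.uIcc (0:ℝ) 1) :=
        hFc.comp hLcont.continuousOn hLmem
      have h2 : Continuous (fun A : (Fin N → ℝ) →L[ℝ] (Fin N → ℝ) =>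
          A (Pi.single k 1 : Fin N → ℝ) j) := by
        have h3 := (ContinuousLinearMap.apply ℝ (Fin N → ℝ)
          (Pi.single k 1 : Fin N → ℝ)).continuous
        exact (continuous_apply j).comp h3
      exact h2.comp_continuousOn h1
    set g : Fin N → ℝ → ℝ := fun j t => ∑ k, (σ j * σ k * Jac F (L t) j k) * v k with hg
    have hgcont : ∀ j, ContinuousOn (g j) (Set.uIcc (0:ℝ) 1) := by
      intro j
      apply continuousOn_finset_sum
      intro k _
      exact (continuousOn_const.mul (hcontJ j k)).mul continuousOn_const
    have hgnn : ∀ j, ∀ t ∈ Set.uIcc (0:ℝ) 1, 0 ≤ g j t := by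
      intro j t ht
      exact Finset.sum_nonneg fun k _ =>
        mul_nonneg (hB (L t) (hLmem t ht) j k) (hv0 k)
    have hFTC : ∀ j, v j = ∫ t in (0:ℝ)..1, g j t := by
      intro j
      have hder : ∀ t ∈ Set.uIcc (0:ℝ) 1,
          HasDerivAt (fun t => σ j * F (L t) j) (g j t) t := by
        intro t ht
        have hd : DifferentiableAt ℝ F (L t) :=
          (hC1.differentiableOn one_ne_zero).differentiableAt
            ((isOpen_posOrth N).mem_nhds (hLmem t ht))
        have h2 : HasDerivAt (fun t => F (L t)) (fderiv ℝ F (L t) (fun i => y i - z i)) t :=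
          hd.hasFDerivAt.comp_hasDerivAt t (hLder t)
        have h3 : HasDerivAt (fun t => F (L t) j)
            (fderiv ℝ F (L t) (fun i => y i - z i) j) t := hasDerivAt_pi.1 h2 j
        have h4 := h3.const_mul (σ j)
        refine h4.congr_deriv ?_
        symm
        rw [fderiv_eval, Finset.mul_sum]
        exact Finset.sum_congr rfl fun k _ => by
          show (σ j * σ k * Jac F (L t) j k) * (σ k * (y k - z k)) = _
          linear_combination (σ j * Jac F (L t) j k * (y k - z k)) * hσsq k
      have hint : IntervalIntegrable (g j) MeasureTheory.volume 0 1 :=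
        (hgcont j).intervalIntegrable
      have heq := intervalIntegral.integral_eq_sub_of_hasDerivAt hder hint
      rw [hL1, hL0, hyfix, hzfix] at heq
      rw [heq]
      show σ j * (y j - z j) = _
      ring
    have step2 : ∀ k j, 0 < v k → Jac F z j k ≠ 0 → 0 < v j := by
      intro k j hk hjk
      rw [hFTC j]
      calc (0:ℝ) = ∫ _ in (0:ℝ)..1, (0:ℝ) := by simp
        _ < ∫ t in (0:ℝ)..1, g j t := by
          apply intervalIntegral.integral_lt_integral_of_continuousOn_of_le_of_exists_lt
            zero_lt_one continuousOn_const ((hgcont j).mono (le_of_eq huIcc.symm))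
          · intro t ht
            exact hgnn j t (by rw [huIcc]; exact Set.Ioc_subset_Icc_self ht)
          · refine ⟨0, Set.left_mem_Icc.2 zero_le_one, ?_⟩
            show 0 < g j 0
            rw [hg]
            dsimp only
            apply Finset.sum_pos'
            · intro i _
              exact mul_nonneg (hB (L 0) (hLmem 0 (by rw [huIcc]; exact Set.left_mem_Icc.2 zero_le_one)) j i) (hv0 i)
            · refine ⟨k, Finset.mem_univ k, mul_pos ?_ hk⟩
              have hnz : Jac F (L 0) j k ≠ 0 := by rw [hL0]; exact hjk
              have hnn : 0 ≤ σ j * σ k * Jac F (L 0) j k :=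
                hB (L 0) (hLmem 0 (by rw [huIcc]; exact Set.left_mem_Icc.2 zero_le_one)) j k
              exact hnn.lt_of_ne (by
                symm; exact mul_ne_zero (mul_ne_zero (hσne j) (hσne k)) hnz)
    have hvall : ∀ i, v i = 0 := by
      by_contra hco
      push_neg at hco
      obtain ⟨b, hb⟩ := hco
      have hbpos : 0 < v b := (hv0 b).lt_of_ne (Ne.symm hb)
      have hprop : ∀ a, 0 < v a := by
        intro a
        have h := hconn z hzpos b a
        induction h with
        | single e => exact step2 _ _ hbpos (fun h0 => e (by simp [Matrix.of_apply, h0]))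
        | tail h e ih => exact step2 _ _ ih (fun h0 => e (by simp [Matrix.of_apply, h0]))
      have hcontra := hprop j0
      rw [hvj0] at hcontra
      exact lt_irrefl 0 hcontra
    funext i
    have h0 := hvall i
    have h1 : y i - z i = 0 := by
      have := mul_eq_zero.mp h0
      tauto
    show y i = z i
    linarith
  · rintro ⟨c, hc, rfl⟩
    refine ⟨fun i => mul_pos (Real.rpow_pos_of_pos hc _) (hxstar i), ?_⟩
    rw [hscale xstar hxstar c hc, hfix]
end

section
/- Let N ≥ 1, let u ∈ ℝ^N have at least one nonzero entry, and let F : ℝ^N_{++} → ℝ^N_{++} be continuously differentiable. Assume that F connects all variables, that F scales with exponent u, that the monotonicity behavior of F is consistent with u, that F exhibits self-interaction, and that the fixed point equation x = F(x) has a solution x* ∈ ℝ^N_{++}. Then every solution of x = F(x) is Lyapunov stable, and for every x ∈ ℝ^N_{++} the iterates F^n(x) converge, as n → ∞, to a solution of x = F(x). -/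
open Filter

namespace StabAux

variable {N : ℕ}



lemma clm_apply_eq_sum (L : (Fin N → ℝ) →L[ℝ] (Fin N → ℝ)) (v : Fin N → ℝ) (j : Fin N) :
    L v j = ∑ k, v k * L (Pi.single k 1) j := by
  have hv : v = ∑ k, v k • (Pi.single k (1:ℝ) : Fin N → ℝ) := by
    funext i
    simp [Pi.single_apply, Finset.sum_apply]
  conv_lhs => rw [hv]
  simp [map_sum, Finset.sum_apply]

lemma posOrth_open : IsOpen (PosOrth N) := by
  have : PosOrth N = ⋂ i, (fun x : Fin N → ℝ => x i) ⁻¹' Set.Ioi 0 := by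
    ext x; simp [PosOrth]
  rw [this]
  exact isOpen_iInter_of_finite fun i => (continuous_apply i).isOpen_preimage _ isOpen_Ioi

lemma posOrth_convex : Convex ℝ (PosOrth N) := by
  intro x hx y hy a b ha hb hab i
  rcases eq_or_lt_of_le ha with h | h
  · have hb1 : b = 1 := by linarith
    simpa [← h, hb1] using hy i
  · have h1 : 0 < a * x i := mul_pos h (hx i)
    have h2 : 0 ≤ b * y i := mul_nonneg hb (le_of_lt (hy i))
    have : (0:ℝ) < a * x i + b * y i := by linarith
    simpa using this



lemma hasFDerivAt_of_contDiffOn {F : (Fin N → ℝ) → (Fin N → ℝ)}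
    (hC1 : ContDiffOn ℝ 1 F (PosOrth N)) {x : Fin N → ℝ} (hx : x ∈ PosOrth N) :
    HasFDerivAt F (fderiv ℝ F x) x := by
  have hd : DifferentiableAt ℝ F x := by
    have := (hC1.differentiableOn one_ne_zero).differentiableAt
      (posOrth_open.mem_nhds hx)
    exact this
  exact hd.hasFDerivAt

/-- Euler identity from the scaling relation. -/
lemma euler {u : Fin N → ℝ} {F : (Fin N → ℝ) → (Fin N → ℝ)}
    (hC1 : ContDiffOn ℝ 1 F (PosOrth N))
    (hscale : ∀ x ∈ PosOrth N, ∀ c : ℝ, 0 < c → F (pscale c u x) = pscale c u (F x))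
    {x : Fin N → ℝ} (hx : x ∈ PosOrth N) (j : Fin N) :
    ∑ k, (u k * x k) * Jac F x j k = u j * F x j := by
  -- curve γ c = pscale c u x has derivative (fun i => u i * x i) at c = 1
  have hγ : HasDerivAt (fun c : ℝ => pscale c u x) (fun i => u i * x i) 1 := by
    rw [hasDerivAt_pi]
    intro i
    have h := (Real.hasDerivAt_rpow_const (x := (1:ℝ)) (p := u i)
      (Or.inl one_ne_zero)).mul_const (x i)
    simpa [pscale] using h
  have hγ1 : pscale (1:ℝ) u x = x := by funext i; simp [pscale]
  have hF : HasFDerivAt F (fderiv ℝ F x) (pscale (1:ℝ) u x) := by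
    rw [hγ1]; exact hasFDerivAt_of_contDiffOn hC1 hx
  have h1 : HasDerivAt (fun c : ℝ => F (pscale c u x))
      (fderiv ℝ F x (fun i => u i * x i)) 1 := hF.comp_hasDerivAt 1 hγ
  have hδ : HasDerivAt (fun c : ℝ => pscale c u (F x)) (fun j => u j * F x j) 1 := by
    rw [hasDerivAt_pi]
    intro i
    have h := (Real.hasDerivAt_rpow_const (x := (1:ℝ)) (p := u i)
      (Or.inl one_ne_zero)).mul_const (F x i)
    simpa [pscale] using h
  have heq : (fun c : ℝ => F (pscale c u x)) =ᶠ[nhds 1] (fun c : ℝ => pscale c u (F x)) := by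
    filter_upwards [isOpen_Ioi.mem_nhds (show (0:ℝ) < 1 by norm_num)] with c hc
    exact hscale x hx c hc
  have h2 : HasDerivAt (fun c : ℝ => F (pscale c u x)) (fun j => u j * F x j) 1 :=
    heq.symm.hasDerivAt_iff.mp hδ
  have := h1.unique h2
  have hj := congrFun this j
  rw [← hj, clm_apply_eq_sum]
  rfl



/-- If `u j = 0` then row `j` of the Jacobian vanishes against indices with `u k ≠ 0`. -/
lemma row_vanish {u : Fin N → ℝ} {F : (Fin N → ℝ) → (Fin N → ℝ)} {ζ : Fin N → Bool}
    (hζp : ∀ j, ζ j = true → 0 ≤ u j) (hζm : ∀ j, ζ j = false → u j ≤ 0)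
    (hJ : ∀ x ∈ PosOrth N, ∀ j k : Fin N,
      (ζ j = ζ k → 0 ≤ Jac F x j k) ∧ (ζ j ≠ ζ k → Jac F x j k ≤ 0))
    {x : Fin N → ℝ} (hx : x ∈ PosOrth N)
    (heuler : ∀ j, ∑ k, (u k * x k) * Jac F x j k = u j * F x j)
    {j : Fin N} (hj : u j = 0) {k : Fin N} (hk : u k ≠ 0) :
    Jac F x j k = 0 := by
  set s : ℝ := if ζ j then 1 else -1 with hs
  have hterm : ∀ k : Fin N, 0 ≤ s * ((u k * x k) * Jac F x j k) := by
    intro k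
    have hxk := (hx k).le
    cases hbj : ζ j <;> cases hbk : ζ k
    · have hJnn := (hJ x hx j k).1 (by rw [hbj, hbk])
      have huk := hζm k hbk
      have h1 : u k * x k ≤ 0 := mul_nonpos_of_nonpos_of_nonneg huk hxk
      have h2 := mul_nonneg (neg_nonneg.2 h1) hJnn
      have hss : s = -1 := by simp [hs, hbj]
      rw [hss]; nlinarith [h2]
    · have hJnp := (hJ x hx j k).2 (by simp [hbj, hbk])
      have huk := hζp k hbk
      have h1 : 0 ≤ u k * x k := mul_nonneg huk hxk
      have h2 := mul_nonneg h1 (neg_nonneg.2 hJnp)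
      have hss : s = -1 := by simp [hs, hbj]
      rw [hss]; nlinarith [h2]
    · have hJnp := (hJ x hx j k).2 (by simp [hbj, hbk])
      have huk := hζm k hbk
      have h1 : u k * x k ≤ 0 := mul_nonpos_of_nonpos_of_nonneg huk hxk
      have h2 := mul_nonneg (neg_nonneg.2 h1) (neg_nonneg.2 hJnp)
      have hss : s = 1 := by simp [hs, hbj]
      rw [hss]; nlinarith [h2]
    · have hJnn := (hJ x hx j k).1 (by rw [hbj, hbk])
      have huk := hζp k hbk
      have h1 : 0 ≤ u k * x k := mul_nonneg huk hxk
      have h2 := mul_nonneg h1 hJnn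
      have hss : s = 1 := by simp [hs, hbj]
      rw [hss]; nlinarith [h2]
  have hsum : ∑ k, s * ((u k * x k) * Jac F x j k) = 0 := by
    rw [← Finset.mul_sum, heuler j, hj]
    ring
  have hzero := (Finset.sum_eq_zero_iff_of_nonneg (fun k _ => hterm k)).mp hsum k (Finset.mem_univ k)
  have hsne : s ≠ 0 := by
    rcases Bool.eq_false_or_eq_true (ζ j) with hb | hb <;> simp [hs, hb]
  have h1 : (u k * x k) * Jac F x j k = 0 := by
    rcases mul_eq_zero.mp hzero with h | h
    · exact absurd h hsne
    · exact h
  rcases mul_eq_zero.mp h1 with h | h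
  · exact absurd h (mul_ne_zero hk (ne_of_gt (hx k)))
  · exact h

/-- All entries of `u` are nonzero. -/
lemma u_ne_zero {u : Fin N → ℝ} {F : (Fin N → ℝ) → (Fin N → ℝ)} {ζ : Fin N → Bool}
    (hu : u ≠ 0)
    (hζp : ∀ j, ζ j = true → 0 ≤ u j) (hζm : ∀ j, ζ j = false → u j ≤ 0)
    (hJ : ∀ x ∈ PosOrth N, ∀ j k : Fin N,
      (ζ j = ζ k → 0 ≤ Jac F x j k) ∧ (ζ j ≠ ζ k → Jac F x j k ≤ 0))
    {x : Fin N → ℝ} (hx : x ∈ PosOrth N)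
    (heuler : ∀ j, ∑ k, (u k * x k) * Jac F x j k = u j * F x j)
    (hconn : MatIrred (Matrix.of fun j k => |Jac F x j k|)) :
    ∀ j, u j ≠ 0 := by
  obtain ⟨a, ha⟩ : ∃ a, u a ≠ 0 := by
    by_contra h
    push_neg at h
    exact hu (funext h)
  intro b
  have htg := hconn a b
  clear hconn
  induction htg with
  | single hr =>
      by_contra hb
      have : Jac F x _ a = 0 := row_vanish hζp hζm hJ hx heuler hb ha
      simp [Matrix.of_apply, this] at hr
  | tail htg hr ih =>
      by_contra hb
      have : Jac F x _ _ = 0 := row_vanish hζp hζm hJ hx heuler hb ih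
      simp [Matrix.of_apply, this] at hr



/-- `Epos u w = exp (u * w)` entrywise. -/
noncomputable def Epos (u : Fin N → ℝ) (w : Fin N → ℝ) : Fin N → ℝ :=
  fun i => Real.exp (u i * w i)

/-- `Lg u x = log x / u` entrywise. -/
noncomputable def Lg (u : Fin N → ℝ) (x : Fin N → ℝ) : Fin N → ℝ :=
  fun i => Real.log (x i) / u i

noncomputable def Phi (u : Fin N → ℝ) (F : (Fin N → ℝ) → (Fin N → ℝ)) :
    (Fin N → ℝ) → (Fin N → ℝ) :=
  fun w => Lg u (F (Epos u w))

lemma Epos_mem (u : Fin N → ℝ) (w : Fin N → ℝ) : Epos u w ∈ PosOrth N :=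
  fun i => Real.exp_pos _

lemma Lg_Epos {u : Fin N → ℝ} (hu0 : ∀ j, u j ≠ 0) (w : Fin N → ℝ) :
    Lg u (Epos u w) = w := by
  funext i
  simp only [Lg, Epos, Real.log_exp]
  exact mul_div_cancel_left₀ (w i) (hu0 i)

lemma Epos_Lg {u : Fin N → ℝ} (hu0 : ∀ j, u j ≠ 0) {x : Fin N → ℝ} (hx : x ∈ PosOrth N) :
    Epos u (Lg u x) = x := by
  funext i
  have : u i * (Real.log (x i) / u i) = Real.log (x i) := by
    rw [mul_comm, div_mul_cancel₀ _ (hu0 i)]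
  simp [Lg, Epos, this, Real.exp_log (hx i)]

/-- Diagonal continuous linear map. -/
noncomputable def diagCLM (c : Fin N → ℝ) : (Fin N → ℝ) →L[ℝ] (Fin N → ℝ) :=
  ContinuousLinearMap.pi (fun i => c i • ContinuousLinearMap.proj i)

@[simp] lemma diagCLM_apply (c : Fin N → ℝ) (v : Fin N → ℝ) (i : Fin N) :
    diagCLM c v i = c i * v i := rfl

/-- The derivative of `Epos u` at `w`. -/
lemma hasFDerivAt_Epos (u : Fin N → ℝ) (w : Fin N → ℝ) :
    HasFDerivAt (Epos u) (diagCLM (fun i => u i * Epos u w i)) w := by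
  apply hasFDerivAt_pi''
  intro i
  have h1 : HasDerivAt (fun s : ℝ => Real.exp (u i * s)) (u i * Real.exp (u i * w i)) (w i) := by
    have := (Real.hasDerivAt_exp (u i * w i)).comp (w i) ((hasDerivAt_id (w i)).const_mul (u i))
    simpa [Function.comp_def, mul_comm] using this
  have h2 := (ContinuousLinearMap.proj (R := ℝ) (φ := fun _ : Fin N => ℝ) i).hasFDerivAt (x := w)
  have h3 := h1.comp_hasFDerivAt w h2
  have heq : ((ContinuousLinearMap.proj i).comp (diagCLM (fun i => u i * Epos u w i))
      : (Fin N → ℝ) →L[ℝ] ℝ)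
      = (u i * Real.exp (u i * w i)) • (ContinuousLinearMap.proj i) := by
    ext v
    simp [Epos, mul_comm, mul_assoc]
  rw [heq]
  exact h3

/-- The derivative of `Lg u` at a positive point. -/
lemma hasFDerivAt_Lg (u : Fin N → ℝ) {y : Fin N → ℝ} (hy : y ∈ PosOrth N) :
    HasFDerivAt (Lg u) (diagCLM (fun j => (u j * y j)⁻¹)) y := by
  apply hasFDerivAt_pi''
  intro i
  have h1 : HasDerivAt (fun s : ℝ => Real.log s / u i) ((y i)⁻¹ / u i) (y i) :=
    (Real.hasDerivAt_log (ne_of_gt (hy i))).div_const (u i)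
  have h2 := (ContinuousLinearMap.proj (R := ℝ) (φ := fun _ : Fin N => ℝ) i).hasFDerivAt (x := y)
  have h3 := h1.comp_hasFDerivAt y h2
  have heq : ((ContinuousLinearMap.proj i).comp (diagCLM (fun j => (u j * y j)⁻¹))
      : (Fin N → ℝ) →L[ℝ] ℝ)
      = ((y i)⁻¹ / u i) • (ContinuousLinearMap.proj i) := by
    ext v
    simp [mul_inv, div_eq_mul_inv, mul_comm]
  rw [heq]
  exact h3

/-- Full derivative of `Phi` at `w`. -/
noncomputable def DPhi (u : Fin N → ℝ) (F : (Fin N → ℝ) → (Fin N → ℝ)) (w : Fin N → ℝ) :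
    (Fin N → ℝ) →L[ℝ] (Fin N → ℝ) :=
  (diagCLM (fun j => (u j * F (Epos u w) j)⁻¹)).comp
    ((fderiv ℝ F (Epos u w)).comp (diagCLM (fun i => u i * Epos u w i)))

lemma hasFDerivAt_Phi {u : Fin N → ℝ} {F : (Fin N → ℝ) → (Fin N → ℝ)}
    (hC1 : ContDiffOn ℝ 1 F (PosOrth N)) (hmap : ∀ x ∈ PosOrth N, F x ∈ PosOrth N)
    (w : Fin N → ℝ) :
    HasFDerivAt (Phi u F) (DPhi u F w) w := by
  have h1 := hasFDerivAt_Epos u w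
  have h2 := hasFDerivAt_of_contDiffOn hC1 (Epos_mem u w)
  have h3 := hasFDerivAt_Lg u (hmap _ (Epos_mem u w))
  exact (h3.comp w (h2.comp w h1) : _)

/-- Entry `(j,k)` of the Jacobian of `Phi`. -/
lemma DPhi_single {u : Fin N → ℝ} (F : (Fin N → ℝ) → (Fin N → ℝ)) (w : Fin N → ℝ)
    (j k : Fin N) :
    DPhi u F w (Pi.single k 1) j
      = (u j * F (Epos u w) j)⁻¹ * ((u k * Epos u w k) * Jac F (Epos u w) j k) := by
  have hsingle : (fun i => (u i * Epos u w i) * (Pi.single k (1:ℝ) : Fin N → ℝ) i)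
      = (u k * Epos u w k) • (Pi.single k (1:ℝ) : Fin N → ℝ) := by
    funext i
    by_cases h : i = k
    · subst h; simp
    · simp [Pi.single_apply, h]
  simp only [DPhi, ContinuousLinearMap.comp_apply]
  have : diagCLM (fun i => u i * Epos u w i) (Pi.single k 1)
      = (u k * Epos u w k) • (Pi.single k (1:ℝ) : Fin N → ℝ) := by
    funext i
    have := congrFun hsingle i
    simpa using this
  rw [this, map_smul]
  simp [Jac, mul_comm, mul_assoc]



lemma Epos_add (u : Fin N → ℝ) (w : Fin N → ℝ) (t : ℝ) :
    Epos u (fun i => w i + t) = pscale (Real.exp t) u (Epos u w) := by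
  funext i
  have h1 : Real.exp t ^ u i = Real.exp (u i * t) := by
    rw [Real.rpow_def_of_pos (Real.exp_pos t), Real.log_exp, mul_comm]
  simp only [Epos, pscale, h1, ← Real.exp_add]
  ring_nf

lemma Lg_pscale {u : Fin N → ℝ} (hu0 : ∀ j, u j ≠ 0) {y : Fin N → ℝ} (hy : y ∈ PosOrth N)
    (t : ℝ) : Lg u (pscale (Real.exp t) u y) = fun j => Lg u y j + t := by
  funext j
  have hpos : (0:ℝ) < Real.exp t ^ u j := Real.rpow_pos_of_pos (Real.exp_pos t) _
  show Real.log (Real.exp t ^ u j * y j) / u j = Real.log (y j) / u j + t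
  rw [Real.log_mul (ne_of_gt hpos) (ne_of_gt (hy j)),
    Real.log_rpow (Real.exp_pos t), Real.log_exp]
  rw [add_div, mul_div_cancel_left₀ _ (hu0 j)]
  ring

/-- Additive homogeneity of `Phi`. -/
lemma Phi_hom {u : Fin N → ℝ} {F : (Fin N → ℝ) → (Fin N → ℝ)} (hu0 : ∀ j, u j ≠ 0)
    (hmap : ∀ x ∈ PosOrth N, F x ∈ PosOrth N)
    (hscale : ∀ x ∈ PosOrth N, ∀ c : ℝ, 0 < c → F (pscale c u x) = pscale c u (F x))
    (w : Fin N → ℝ) (t : ℝ) :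
    Phi u F (fun i => w i + t) = fun j => Phi u F w j + t := by
  have h1 : F (Epos u (fun i => w i + t)) = pscale (Real.exp t) u (F (Epos u w)) := by
    rw [Epos_add, hscale _ (Epos_mem u w) _ (Real.exp_pos t)]
  simp only [Phi, h1]
  exact Lg_pscale hu0 (hmap _ (Epos_mem u w)) t



lemma mul_nonneg_of_nonpos_nonpos' {a b : ℝ} (ha : a ≤ 0) (hb : b ≤ 0) : 0 ≤ a * b := by
  nlinarith

/-- `DPhi` applied to the all-ones vector is the all-ones vector. -/
lemma DPhi_one {u : Fin N → ℝ} {F : (Fin N → ℝ) → (Fin N → ℝ)}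
    (hC1 : ContDiffOn ℝ 1 F (PosOrth N)) (hmap : ∀ x ∈ PosOrth N, F x ∈ PosOrth N)
    (hu0 : ∀ j, u j ≠ 0)
    (hscale : ∀ x ∈ PosOrth N, ∀ c : ℝ, 0 < c → F (pscale c u x) = pscale c u (F x))
    (w : Fin N → ℝ) :
    DPhi u F w (fun _ => (1:ℝ)) = fun _ => (1:ℝ) := by
  have hcurve : HasDerivAt (fun t : ℝ => (fun i => w i + t)) (fun _ : Fin N => (1:ℝ)) 0 := by
    rw [hasDerivAt_pi]
    intro i
    simpa using (hasDerivAt_id (0:ℝ)).const_add (w i)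
  have hw0 : (fun i => w i + (0:ℝ)) = w := by funext i; ring
  have hPhi := hasFDerivAt_Phi (u := u) hC1 hmap w
  rw [← hw0] at hPhi
  have h1 := hPhi.comp_hasDerivAt 0 hcurve
  rw [hw0] at h1
  have h1' : HasDerivAt (fun t : ℝ => Phi u F (fun i => w i + t))
      (DPhi u F w (fun _ => (1:ℝ))) 0 := h1
  have heq : (fun t : ℝ => Phi u F (fun i => w i + t))
      = fun t : ℝ => (fun j => Phi u F w j + t) := by
    funext t
    exact Phi_hom hu0 hmap hscale w t
  rw [heq] at h1'
  have h2 : HasDerivAt (fun t : ℝ => (fun j : Fin N => Phi u F w j + t))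
      (fun _ : Fin N => (1:ℝ)) 0 := by
    rw [hasDerivAt_pi]
    intro i
    simpa using (hasDerivAt_id (0:ℝ)).const_add (Phi u F w i)
  exact h1'.unique h2

lemma DPhi_row_sum {u : Fin N → ℝ} {F : (Fin N → ℝ) → (Fin N → ℝ)}
    (hC1 : ContDiffOn ℝ 1 F (PosOrth N)) (hmap : ∀ x ∈ PosOrth N, F x ∈ PosOrth N)
    (hu0 : ∀ j, u j ≠ 0)
    (hscale : ∀ x ∈ PosOrth N, ∀ c : ℝ, 0 < c → F (pscale c u x) = pscale c u (F x))
    (w : Fin N → ℝ) (j : Fin N) :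
    ∑ k, DPhi u F w (Pi.single k 1) j = 1 := by
  have h := congrFun (DPhi_one hC1 hmap hu0 hscale w) j
  rw [clm_apply_eq_sum] at h
  simpa using h

/-- Entries of the Jacobian of `Phi` are nonnegative. -/
lemma DPhi_entry_nonneg {u : Fin N → ℝ} {F : (Fin N → ℝ) → (Fin N → ℝ)} {ζ : Fin N → Bool}
    (hmap : ∀ x ∈ PosOrth N, F x ∈ PosOrth N)
    (hζp' : ∀ j, ζ j = true → 0 < u j) (hζm' : ∀ j, ζ j = false → u j < 0)
    (hJ : ∀ x ∈ PosOrth N, ∀ j k : Fin N,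
      (ζ j = ζ k → 0 ≤ Jac F x j k) ∧ (ζ j ≠ ζ k → Jac F x j k ≤ 0))
    (w : Fin N → ℝ) (j k : Fin N) :
    0 ≤ DPhi u F w (Pi.single k 1) j := by
  rw [DPhi_single]
  set x := Epos u w with hx
  have hxmem : x ∈ PosOrth N := Epos_mem u w
  have hymem : F x ∈ PosOrth N := hmap _ hxmem
  have hxk : 0 < x k := hxmem k
  have hyj : 0 < F x j := hymem j
  cases hbj : ζ j <;> cases hbk : ζ k
  · have hJnn := (hJ x hxmem j k).1 (by rw [hbj, hbk])
    have huj := hζm' j hbj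
    have huk := hζm' k hbk
    have h1 : (u j * F x j)⁻¹ ≤ 0 := inv_nonpos.2 (mul_nonpos_of_nonpos_of_nonneg huj.le hyj.le)
    have h2 : (u k * x k) * Jac F x j k ≤ 0 :=
      mul_nonpos_of_nonpos_of_nonneg (mul_nonpos_of_nonpos_of_nonneg huk.le hxk.le) hJnn
    exact mul_nonneg_of_nonpos_nonpos' h1 h2
  · have hJnp := (hJ x hxmem j k).2 (by simp [hbj, hbk])
    have huj := hζm' j hbj
    have huk := hζp' k hbk
    have h1 : (u j * F x j)⁻¹ ≤ 0 := inv_nonpos.2 (mul_nonpos_of_nonpos_of_nonneg huj.le hyj.le)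
    have h2 : (u k * x k) * Jac F x j k ≤ 0 :=
      mul_nonpos_of_nonneg_of_nonpos (mul_nonneg huk.le hxk.le) hJnp
    exact mul_nonneg_of_nonpos_nonpos' h1 h2
  · have hJnp := (hJ x hxmem j k).2 (by simp [hbj, hbk])
    have huj := hζp' j hbj
    have huk := hζm' k hbk
    have h1 : 0 ≤ (u j * F x j)⁻¹ := inv_nonneg.2 (mul_nonneg huj.le hyj.le)
    have h2 : 0 ≤ (u k * x k) * Jac F x j k :=
      mul_nonneg_of_nonpos_nonpos' (mul_nonpos_of_nonpos_of_nonneg huk.le hxk.le) hJnp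
    exact mul_nonneg h1 h2
  · have hJnn := (hJ x hxmem j k).1 (by rw [hbj, hbk])
    have huj := hζp' j hbj
    have huk := hζp' k hbk
    have h1 : 0 ≤ (u j * F x j)⁻¹ := inv_nonneg.2 (mul_nonneg huj.le hyj.le)
    have h2 : 0 ≤ (u k * x k) * Jac F x j k :=
      mul_nonneg (mul_nonneg huk.le hxk.le) hJnn
    exact mul_nonneg h1 h2

/-- `Phi` is monotone. -/
lemma Phi_mono {u : Fin N → ℝ} {F : (Fin N → ℝ) → (Fin N → ℝ)}
    (hC1 : ContDiffOn ℝ 1 F (PosOrth N)) (hmap : ∀ x ∈ PosOrth N, F x ∈ PosOrth N)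
    (hnn : ∀ w j k, 0 ≤ DPhi u F w (Pi.single k 1) j) :
    Monotone (Phi u F) := by
  intro a b hab
  intro j
  set v := fun i => b i - a i with hv
  have hcurve : ∀ t : ℝ, HasDerivAt (fun s : ℝ => (fun i => a i + s * v i)) v t := by
    intro t
    rw [hasDerivAt_pi]
    intro i
    simpa using ((hasDerivAt_id t).mul_const (v i)).const_add (a i)
  have hg : ∀ t : ℝ, HasDerivAt (fun s : ℝ => Phi u F (fun i => a i + s * v i) j)
      (DPhi u F (fun i => a i + t * v i) v j) t := by
    intro t
    have hPhi := hasFDerivAt_Phi (u := u) hC1 hmap (fun i => a i + t * v i)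
    have h1 := hPhi.comp_hasDerivAt t (hcurve t)
    exact (hasDerivAt_pi.mp h1) j
  have hmono : Monotone (fun s : ℝ => Phi u F (fun i => a i + s * v i) j) := by
    apply monotone_of_deriv_nonneg
    · intro t
      exact (hg t).differentiableAt
    · intro t
      rw [(hg t).deriv, clm_apply_eq_sum]
      apply Finset.sum_nonneg
      intro k _
      have hvk : 0 ≤ v k := by simp [hv, sub_nonneg.2 (hab k)]
      exact mul_nonneg hvk (hnn _ j k)
  have h0 : (fun i => a i + (0:ℝ) * v i) = a := by funext i; ring
  have h1 : (fun i => a i + (1:ℝ) * v i) = b := by funext i; simp [hv]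
  have h2 := hmono (show (0:ℝ) ≤ 1 by norm_num)
  simp only [] at h2
  rw [h0, h1] at h2
  exact h2



/-- Key equality-propagation lemma (max version). -/
lemma key_max {u : Fin N → ℝ} {F : (Fin N → ℝ) → (Fin N → ℝ)}
    (hC1 : ContDiffOn ℝ 1 F (PosOrth N)) (hmap : ∀ x ∈ PosOrth N, F x ∈ PosOrth N)
    (hnn : ∀ w j k, 0 ≤ DPhi u F w (Pi.single k 1) j)
    (hrow : ∀ w j, ∑ k, DPhi u F w (Pi.single k 1) j = 1)
    (p v : Fin N → ℝ) (β : ℝ) (hv : ∀ k, v k ≤ β) (j : Fin N)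
    (hj : Phi u F (fun i => p i + v i) j - Phi u F p j = β) :
    ∀ k, DPhi u F p (Pi.single k 1) j ≠ 0 → v k = β := by
  -- the scalar function along the segment
  have hcurve : ∀ t : ℝ, HasDerivAt (fun s : ℝ => (fun i => p i + s * v i)) v t := by
    intro t
    rw [hasDerivAt_pi]
    intro i
    simpa using ((hasDerivAt_id t).mul_const (v i)).const_add (p i)
  have hg : ∀ t : ℝ, HasDerivAt (fun s : ℝ => Phi u F (fun i => p i + s * v i) j)
      (DPhi u F (fun i => p i + t * v i) v j) t := by
    intro t
    have hPhi := hasFDerivAt_Phi (u := u) hC1 hmap (fun i => p i + t * v i)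
    have h1 := hPhi.comp_hasDerivAt t (hcurve t)
    exact (hasDerivAt_pi.mp h1) j
  -- the derivative is bounded by β
  have hgle : ∀ t : ℝ, DPhi u F (fun i => p i + t * v i) v j ≤ β := by
    intro t
    rw [clm_apply_eq_sum]
    calc ∑ k, v k * DPhi u F (fun i => p i + t * v i) (Pi.single k 1) j
        ≤ ∑ k, β * DPhi u F (fun i => p i + t * v i) (Pi.single k 1) j := by
          apply Finset.sum_le_sum
          intro k _
          exact mul_le_mul_of_nonneg_right (hv k) (hnn _ j k)
      _ = β := by rw [← Finset.mul_sum, hrow]; ring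
  -- φ is monotone
  set ψ : ℝ → ℝ := fun s => Phi u F (fun i => p i + s * v i) j with hψ
  set φ : ℝ → ℝ := fun s => β * s - ψ s with hφ
  have hφd : ∀ t : ℝ, HasDerivAt φ (β - DPhi u F (fun i => p i + t * v i) v j) t := by
    intro t
    have := ((hasDerivAt_id t).const_mul β).sub (hg t)
    rw [mul_one] at this
    exact this
  have hφmono : Monotone φ := by
    apply monotone_of_deriv_nonneg
    · intro t; exact (hφd t).differentiableAt
    · intro t; rw [(hφd t).deriv]; linarith [hgle t]
  -- φ 1 = φ 0
  have hψ1 : ψ 1 - ψ 0 = β := by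
    have e1 : (fun i => p i + (1:ℝ) * v i) = fun i => p i + v i := by funext i; ring
    have e0 : (fun i => p i + (0:ℝ) * v i) = p := by funext i; ring
    simp only [hψ, e1, e0]
    exact hj
  have hφeq : φ 1 = φ 0 := by simp only [hφ]; simp; linarith
  -- φ constant on [0, 1]
  have hconst : ∀ t ∈ Set.Icc (0:ℝ) 1, φ t = φ 0 := by
    intro t ht
    have h1 := hφmono ht.1
    have h2 := hφmono ht.2
    rw [hφeq] at h2
    linarith
  -- derivative of φ at 0 within [0,1] is 0
  have hd0 : HasDerivWithinAt φ 0 (Set.Icc (0:ℝ) 1) 0 := by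
    have hc : HasDerivWithinAt (fun _ : ℝ => φ 0) 0 (Set.Icc (0:ℝ) 1) 0 :=
      (hasDerivWithinAt_const 0 _ (φ 0))
    exact hc.congr (fun y hy => hconst y hy) (hconst 0 ⟨le_refl 0, zero_le_one⟩)
  have hd0' : HasDerivWithinAt φ (β - DPhi u F (fun i => p i + 0 * v i) v j)
      (Set.Icc (0:ℝ) 1) 0 := (hφd 0).hasDerivWithinAt
  have hunique : UniqueDiffWithinAt ℝ (Set.Icc (0:ℝ) 1) 0 :=
    (uniqueDiffOn_Icc zero_lt_one) 0 ⟨le_refl 0, zero_le_one⟩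
  have hβg : β - DPhi u F (fun i => p i + 0 * v i) v j = 0 :=
    hunique.eq_deriv _ hd0' hd0
  have e0 : (fun i => p i + (0:ℝ) * v i) = p := by funext i; ring
  rw [e0] at hβg
  have hsum : ∑ k, v k * DPhi u F p (Pi.single k 1) j = β := by
    have := clm_apply_eq_sum (DPhi u F p) v j
    linarith [this, hβg]
  -- extract equality for each k in the support
  have hzero : ∀ k ∈ Finset.univ, (β - v k) * DPhi u F p (Pi.single k 1) j = 0 := by
    apply (Finset.sum_eq_zero_iff_of_nonneg _).mp
    · simp only [sub_mul]
      rw [Finset.sum_sub_distrib, ← Finset.mul_sum, hrow p j]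
      linarith [hsum]
    · intro k _
      exact mul_nonneg (by linarith [hv k]) (hnn p j k)
  intro k hk
  have := hzero k (Finset.mem_univ k)
  rcases mul_eq_zero.mp this with h | h
  · linarith
  · exact absurd h hk



/-- Key equality-propagation lemma (min version). -/
lemma key_min {u : Fin N → ℝ} {F : (Fin N → ℝ) → (Fin N → ℝ)}
    (hC1 : ContDiffOn ℝ 1 F (PosOrth N)) (hmap : ∀ x ∈ PosOrth N, F x ∈ PosOrth N)
    (hnn : ∀ w j k, 0 ≤ DPhi u F w (Pi.single k 1) j)
    (hrow : ∀ w j, ∑ k, DPhi u F w (Pi.single k 1) j = 1)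
    (p v : Fin N → ℝ) (α : ℝ) (hv : ∀ k, α ≤ v k) (j : Fin N)
    (hj : Phi u F (fun i => p i + v i) j - Phi u F p j = α) :
    ∀ k, DPhi u F p (Pi.single k 1) j ≠ 0 → v k = α := by
  have hcurve : ∀ t : ℝ, HasDerivAt (fun s : ℝ => (fun i => p i + s * v i)) v t := by
    intro t
    rw [hasDerivAt_pi]
    intro i
    simpa using ((hasDerivAt_id t).mul_const (v i)).const_add (p i)
  have hg : ∀ t : ℝ, HasDerivAt (fun s : ℝ => Phi u F (fun i => p i + s * v i) j)
      (DPhi u F (fun i => p i + t * v i) v j) t := by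
    intro t
    have hPhi := hasFDerivAt_Phi (u := u) hC1 hmap (fun i => p i + t * v i)
    have h1 := hPhi.comp_hasDerivAt t (hcurve t)
    exact (hasDerivAt_pi.mp h1) j
  have hgge : ∀ t : ℝ, α ≤ DPhi u F (fun i => p i + t * v i) v j := by
    intro t
    rw [clm_apply_eq_sum]
    calc (α:ℝ) = ∑ k, α * DPhi u F (fun i => p i + t * v i) (Pi.single k 1) j := by
          rw [← Finset.mul_sum, hrow]; ring
      _ ≤ ∑ k, v k * DPhi u F (fun i => p i + t * v i) (Pi.single k 1) j := by
          apply Finset.sum_le_sum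
          intro k _
          exact mul_le_mul_of_nonneg_right (hv k) (hnn _ j k)
  set ψ : ℝ → ℝ := fun s => Phi u F (fun i => p i + s * v i) j with hψ
  set φ : ℝ → ℝ := fun s => ψ s - α * s with hφ
  have hφd : ∀ t : ℝ, HasDerivAt φ (DPhi u F (fun i => p i + t * v i) v j - α) t := by
    intro t
    have := (hg t).sub ((hasDerivAt_id t).const_mul α)
    rw [mul_one] at this
    exact this
  have hφmono : Monotone φ := by
    apply monotone_of_deriv_nonneg
    · intro t; exact (hφd t).differentiableAt
    · intro t; rw [(hφd t).deriv]; linarith [hgge t]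
  have hψ1 : ψ 1 - ψ 0 = α := by
    have e1 : (fun i => p i + (1:ℝ) * v i) = fun i => p i + v i := by funext i; ring
    have e0 : (fun i => p i + (0:ℝ) * v i) = p := by funext i; ring
    simp only [hψ, e1, e0]
    exact hj
  have hφeq : φ 1 = φ 0 := by simp only [hφ]; simp; linarith
  have hconst : ∀ t ∈ Set.Icc (0:ℝ) 1, φ t = φ 0 := by
    intro t ht
    have h1 := hφmono ht.1
    have h2 := hφmono ht.2
    rw [hφeq] at h2
    linarith
  have hd0 : HasDerivWithinAt φ 0 (Set.Icc (0:ℝ) 1) 0 := by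
    have hc : HasDerivWithinAt (fun _ : ℝ => φ 0) 0 (Set.Icc (0:ℝ) 1) 0 :=
      (hasDerivWithinAt_const 0 _ (φ 0))
    exact hc.congr (fun y hy => hconst y hy) (hconst 0 ⟨le_refl 0, zero_le_one⟩)
  have hd0' : HasDerivWithinAt φ (DPhi u F (fun i => p i + 0 * v i) v j - α)
      (Set.Icc (0:ℝ) 1) 0 := (hφd 0).hasDerivWithinAt
  have hunique : UniqueDiffWithinAt ℝ (Set.Icc (0:ℝ) 1) 0 :=
    (uniqueDiffOn_Icc zero_lt_one) 0 ⟨le_refl 0, zero_le_one⟩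
  have hβg : DPhi u F (fun i => p i + 0 * v i) v j - α = 0 :=
    hunique.eq_deriv _ hd0' hd0
  have e0 : (fun i => p i + (0:ℝ) * v i) = p := by funext i; ring
  rw [e0] at hβg
  have hsum : ∑ k, v k * DPhi u F p (Pi.single k 1) j = α := by
    have := clm_apply_eq_sum (DPhi u F p) v j
    linarith [this, hβg]
  have hzero : ∀ k ∈ Finset.univ, (v k - α) * DPhi u F p (Pi.single k 1) j = 0 := by
    apply (Finset.sum_eq_zero_iff_of_nonneg _).mp
    · simp only [sub_mul]
      rw [Finset.sum_sub_distrib, ← Finset.mul_sum, hrow p j]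
      linarith [hsum]
    · intro k _
      exact mul_nonneg (by linarith [hv k]) (hnn p j k)
  intro k hk
  have := hzero k (Finset.mem_univ k)
  rcases mul_eq_zero.mp this with h | h
  · linarith
  · exact absurd h hk

/-- Nonexpansiveness of iterates around a fixed point (sup norm). -/
lemma iter_norm_le {Ψ : (Fin N → ℝ) → (Fin N → ℝ)}
    (hmono : Monotone Ψ)
    (hhom : ∀ w t, Ψ (fun i => w i + t) = fun j => Ψ w j + t)
    {p : Fin N → ℝ} (hp : Ψ p = p) (w : Fin N → ℝ) (n : ℕ) :
    ‖Ψ^[n] w - p‖ ≤ ‖w - p‖ := by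
  have hΨplus : ∀ t : ℝ, Ψ (fun i => p i + t) = fun j => p j + t := by
    intro t
    rw [hhom p t, hp]
  set d := ‖w - p‖ with hd
  have hd0 : 0 ≤ d := norm_nonneg _
  have hband : ∀ n i, p i - d ≤ Ψ^[n] w i ∧ Ψ^[n] w i ≤ p i + d := by
    intro n
    induction n with
    | zero =>
        intro i
        have h1 : ‖(w - p) i‖ ≤ d := norm_le_pi_norm (w - p) i
        rw [Real.norm_eq_abs] at h1
        have h2 := abs_le.1 h1
        simp only [Pi.sub_apply] at h2
        constructor <;> [skip; skip] <;> simp only [Function.iterate_zero_apply] <;>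
          [linarith [h2.1]; linarith [h2.2]]
    | succ n ih =>
        intro i
        have hub : Ψ^[n] w ≤ fun i => p i + d := by
          intro i'
          show Ψ^[n] w i' ≤ p i' + d
          exact (ih i').2
        have hlb : (fun i => p i - d) ≤ Ψ^[n] w := by
          intro i'
          show p i' - d ≤ Ψ^[n] w i'
          exact (ih i').1
        have h1 := hmono hub i
        have h2 := hmono hlb i
        rw [hΨplus d] at h1
        have hlow : Ψ (fun i => p i - d) = fun j => p j - d := by
          have := hΨplus (-d)
          simp only [← sub_eq_add_neg] at this
          exact this
        rw [hlow] at h2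
        have h1' : Ψ (Ψ^[n] w) i ≤ p i + d := h1
        have h2' : p i - d ≤ Ψ (Ψ^[n] w) i := h2
        rw [Function.iterate_succ_apply']
        exact ⟨h2', h1'⟩
  rw [pi_norm_le_iff_of_nonneg hd0]
  intro i
  rw [Pi.sub_apply, Real.norm_eq_abs, abs_le]
  have := hband n i
  constructor <;> linarith [this.1, this.2]



/-- Combinatorial kill lemma. -/
lemma kill {r : Fin N → Fin N → Prop}
    (hirr : ∀ a b : Fin N, Relation.TransGen (fun k j => r j k) a b)
    {j₀ : Fin N} (hdiag : r j₀ j₀)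
    (X : ℕ → Finset (Fin N))
    (hne : ∀ m, (X m).Nonempty)
    (hstep : ∀ m j, j ∈ X (m+1) → ∀ k, r j k → k ∈ X m)
    (hj₀ : ∃ m₀, j₀ ∉ X m₀) : False := by
  obtain ⟨m₀, hm₀⟩ := hj₀
  have hj0up : ∀ m, m₀ ≤ m → j₀ ∉ X m := by
    intro m hm
    induction m, hm using Nat.le_induction with
    | base => exact hm₀
    | succ m hm ih =>
        intro hmem
        exact ih (hstep m j₀ hmem j₀ hdiag)
  have hkill : ∀ c : Fin N, ∃ M, ∀ m, M ≤ m → c ∉ X m := by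
    intro c
    have htg := hirr j₀ c
    induction htg with
    | single h =>
        refine ⟨m₀ + 1, fun m hm hmem => ?_⟩
        obtain ⟨m', rfl⟩ : ∃ m', m = m' + 1 := ⟨m - 1, by omega⟩
        exact hj0up m' (by omega) (hstep m' _ hmem j₀ h)
    | tail htg h ih =>
        obtain ⟨M, hM⟩ := ih
        refine ⟨M + 1, fun m hm hmem => ?_⟩
        obtain ⟨m', rfl⟩ : ∃ m', m = m' + 1 := ⟨m - 1, by omega⟩
        exact hM m' (by omega) (hstep m' _ hmem _ h)
  choose M hM using hkill
  obtain ⟨c, hc⟩ := hne (Finset.univ.sup M)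
  exact hM c _ (Finset.le_sup (Finset.mem_univ c)) hc

/-- Abstract convergence lemma for monotone, additively homogeneous maps. -/
lemma abstract_convergence
    {Ψ : (Fin N → ℝ) → (Fin N → ℝ)} (hN : 1 ≤ N)
    (hcont : Continuous Ψ) (hmono : Monotone Ψ)
    (hhom : ∀ w t, Ψ (fun i => w i + t) = fun j => Ψ w j + t)
    {p : Fin N → ℝ} (hp : Ψ p = p)
    {r : Fin N → Fin N → Prop}
    (hirr : ∀ a b, Relation.TransGen (fun k j => r j k) a b)
    (hdiag : ∃ j₀, r j₀ j₀)
    (hkeymax : ∀ (v : Fin N → ℝ) (β : ℝ), (∀ k, v k ≤ β) →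
      ∀ j, Ψ (fun i => p i + v i) j - p j = β → ∀ k, r j k → v k = β)
    (hkeymin : ∀ (v : Fin N → ℝ) (α : ℝ), (∀ k, α ≤ v k) →
      ∀ j, Ψ (fun i => p i + v i) j - p j = α → ∀ k, r j k → v k = α)
    (w0 : Fin N → ℝ) :
    ∃ q, Ψ q = q ∧ Tendsto (fun n => Ψ^[n] w0) atTop (nhds q) := by
  have hNe : Nonempty (Fin N) := ⟨⟨0, hN⟩⟩
  have huniv : (Finset.univ : Finset (Fin N)).Nonempty := Finset.univ_nonempty
  set βf : (Fin N → ℝ) → ℝ := fun w => Finset.univ.sup' huniv (fun j => w j - p j) with hβfdef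
  set αf : (Fin N → ℝ) → ℝ := fun w => Finset.univ.inf' huniv (fun j => w j - p j) with hαfdef
  have hβf_le : ∀ (w : Fin N → ℝ) j, w j - p j ≤ βf w := by
    intro w j
    simp only [hβfdef]
    exact Finset.le_sup' (fun j => w j - p j) (Finset.mem_univ j)
  have hαf_le : ∀ (w : Fin N → ℝ) j, αf w ≤ w j - p j := by
    intro w j
    simp only [hαfdef]
    exact Finset.inf'_le (fun j => w j - p j) (Finset.mem_univ j)
  have hαβ : ∀ w, αf w ≤ βf w := fun w =>
    le_trans (hαf_le w (Classical.arbitrary _)) (hβf_le w _)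
  have hΨplus : ∀ t : ℝ, Ψ (fun i => p i + t) = fun j => p j + t := by
    intro t
    rw [hhom p t, hp]
  have hβstep : ∀ w, βf (Ψ w) ≤ βf w := by
    intro w
    apply Finset.sup'_le
    intro j _
    have hle : w ≤ fun i => p i + βf w := by
      intro i
      show w i ≤ p i + βf w
      have := hβf_le w i; linarith
    have h1 := hmono hle j
    rw [hΨplus (βf w)] at h1
    have h1' : Ψ w j ≤ p j + βf w := h1
    linarith
  have hαstep : ∀ w, αf w ≤ αf (Ψ w) := by
    intro w
    apply Finset.le_inf'
    intro j _
    have hle : (fun i => p i + αf w) ≤ w := by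
      intro i
      show p i + αf w ≤ w i
      have := hαf_le w i; linarith
    have h1 := hmono hle j
    rw [hΨplus (αf w)] at h1
    have h1' : p j + αf w ≤ Ψ w j := h1
    linarith
  set W : ℕ → Fin N → ℝ := fun n => Ψ^[n] w0 with hWdef
  have hWsucc : ∀ n, W (n+1) = Ψ (W n) := fun n => Function.iterate_succ_apply' Ψ n w0
  set b : ℕ → ℝ := fun n => βf (W n) with hbdef
  set a : ℕ → ℝ := fun n => αf (W n) with hadef
  have hbanti : Antitone b := antitone_nat_of_succ_le fun n => by
    have := hβstep (W n); rw [← hWsucc n] at this; exact this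
  have hamono : Monotone a := monotone_nat_of_le_succ fun n => by
    have := hαstep (W n); rw [← hWsucc n] at this; exact this
  have hab : ∀ n, a n ≤ b n := fun n => hαβ (W n)
  have hbdd_b : BddBelow (Set.range b) := by
    refine ⟨a 0, ?_⟩
    rintro x ⟨n, rfl⟩
    exact le_trans (hamono (Nat.zero_le n)) (hab n)
  have hbdd_a : BddAbove (Set.range a) := by
    refine ⟨b 0, ?_⟩
    rintro x ⟨n, rfl⟩
    exact le_trans (hab n) (hbanti (Nat.zero_le n))
  set βl : ℝ := ⨅ n, b n with hβldef
  set αl : ℝ := ⨆ n, a n with hαldef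
  have hblim : Tendsto b atTop (nhds βl) := tendsto_atTop_ciInf hbanti hbdd_b
  have halim : Tendsto a atTop (nhds αl) := tendsto_atTop_ciSup hamono hbdd_a
  have hle_lim : αl ≤ βl := le_of_tendsto_of_tendsto' halim hblim hab
  -- main claim: αl = βl
  have hmain : αl = βl := by
    by_contra hne'
    have hlt : αl < βl := lt_of_le_of_ne hle_lim hne'
    -- the orbit is bounded
    set R := max |a 0| |b 0| with hRdef
    have hR0 : (0:ℝ) ≤ R := le_trans (abs_nonneg _) (le_max_left _ _)
    have hWball : ∀ n, W n ∈ Metric.closedBall p R := by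
      intro n
      rw [Metric.mem_closedBall, dist_eq_norm]
      rw [pi_norm_le_iff_of_nonneg hR0]
      intro i
      rw [Real.norm_eq_abs, abs_le]
      constructor
      · have h1 := hαf_le (W n) i
        have h2 : a 0 ≤ a n := hamono (Nat.zero_le n)
        have h3 : -|a 0| ≤ a 0 := neg_abs_le _
        have h4 : |a 0| ≤ R := le_max_left _ _
        simp only [Pi.sub_apply]
        linarith
      · have h1 := hβf_le (W n) i
        have h2 : b n ≤ b 0 := hbanti (Nat.zero_le n)
        have h3 : b 0 ≤ |b 0| := le_abs_self _
        have h4 : |b 0| ≤ R := le_max_right _ _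
        simp only [Pi.sub_apply]
        linarith
    obtain ⟨z, hzmem, φ, hφmono, hφlim⟩ :=
      tendsto_subseq_of_bounded Metric.isBounded_closedBall hWball
    -- continuity of βf and αf
    have hβfc : Continuous βf := by
      rw [continuous_iff_continuousAt]
      intro x
      exact ContinuousAt.finset_sup'_apply huniv
        (fun j _ => ((continuous_apply j).continuousAt).sub continuousAt_const)
    have hαfc : Continuous αf := by
      rw [continuous_iff_continuousAt]
      intro x
      exact ContinuousAt.finset_inf'_apply huniv
        (fun j _ => ((continuous_apply j).continuousAt).sub continuousAt_const)
    -- limits of iterates of z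
    have hZlim : ∀ m, Tendsto (fun k => W (φ k + m)) atTop (nhds (Ψ^[m] z)) := by
      intro m
      have he : (fun k => W (φ k + m)) = fun k => Ψ^[m] (W (φ k)) := by
        funext k
        show Ψ^[φ k + m] w0 = Ψ^[m] (Ψ^[φ k] w0)
        rw [add_comm, Function.iterate_add_apply]
      rw [he]
      exact ((hcont.iterate m).tendsto z).comp hφlim
    have hφatTop : Tendsto (fun k => φ k) atTop atTop := hφmono.tendsto_atTop
    have hβZ : ∀ m, βf (Ψ^[m] z) = βl := by
      intro m
      have hplus : Tendsto (fun k => φ k + m) atTop atTop :=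
        tendsto_atTop_mono (fun k => Nat.le_add_right _ _) hφatTop
      have h1 : Tendsto (fun k => b (φ k + m)) atTop (nhds βl) := hblim.comp hplus
      have h2 : Tendsto (fun k => b (φ k + m)) atTop (nhds (βf (Ψ^[m] z))) :=
        (hβfc.tendsto _).comp (hZlim m)
      exact tendsto_nhds_unique h2 h1
    have hαZ : ∀ m, αf (Ψ^[m] z) = αl := by
      intro m
      have hplus : Tendsto (fun k => φ k + m) atTop atTop :=
        tendsto_atTop_mono (fun k => Nat.le_add_right _ _) hφatTop
      have h1 : Tendsto (fun k => a (φ k + m)) atTop (nhds αl) := halim.comp hplus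
      have h2 : Tendsto (fun k => a (φ k + m)) atTop (nhds (αf (Ψ^[m] z))) :=
        (hαfc.tendsto _).comp (hZlim m)
      exact tendsto_nhds_unique h2 h1
    obtain ⟨j₀, hj₀r⟩ := hdiag
    classical
    set T : ℕ → Finset (Fin N) :=
      fun m => Finset.univ.filter (fun j => Ψ^[m] z j - p j = βl) with hTdef
    set S : ℕ → Finset (Fin N) :=
      fun m => Finset.univ.filter (fun j => Ψ^[m] z j - p j = αl) with hSdef
    have hTne : ∀ m, (T m).Nonempty := by
      intro m
      obtain ⟨j, _, hj⟩ := Finset.exists_mem_eq_sup' huniv (fun j => Ψ^[m] z j - p j)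
      refine ⟨j, Finset.mem_filter.2 ⟨Finset.mem_univ j, ?_⟩⟩
      rw [← hj]
      exact hβZ m
    have hSne : ∀ m, (S m).Nonempty := by
      intro m
      obtain ⟨j, _, hj⟩ := Finset.exists_mem_eq_inf' huniv (fun j => Ψ^[m] z j - p j)
      refine ⟨j, Finset.mem_filter.2 ⟨Finset.mem_univ j, ?_⟩⟩
      rw [← hj]
      exact hαZ m
    have hZm : ∀ m, (fun i => p i + (Ψ^[m] z i - p i)) = Ψ^[m] z := by
      intro m; funext i; ring
    have hTstep : ∀ m j, j ∈ T (m+1) → ∀ k, r j k → k ∈ T m := by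
      intro m j hj k hrk
      have hvle : ∀ k', Ψ^[m] z k' - p k' ≤ βl := by
        intro k'
        have := hβf_le (Ψ^[m] z) k'
        rw [hβZ m] at this
        exact this
      have hjeq : Ψ (fun i => p i + (Ψ^[m] z i - p i)) j - p j = βl := by
        have hit : Ψ (Ψ^[m] z) = Ψ^[m+1] z := (Function.iterate_succ_apply' Ψ m z).symm
        rw [hZm m, hit]
        exact (Finset.mem_filter.1 hj).2
      have := hkeymax (fun i => Ψ^[m] z i - p i) βl hvle j hjeq k hrk
      exact Finset.mem_filter.2 ⟨Finset.mem_univ k, this⟩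
    have hSstep : ∀ m j, j ∈ S (m+1) → ∀ k, r j k → k ∈ S m := by
      intro m j hj k hrk
      have hvle : ∀ k', αl ≤ Ψ^[m] z k' - p k' := by
        intro k'
        have := hαf_le (Ψ^[m] z) k'
        rw [hαZ m] at this
        exact this
      have hjeq : Ψ (fun i => p i + (Ψ^[m] z i - p i)) j - p j = αl := by
        have hit : Ψ (Ψ^[m] z) = Ψ^[m+1] z := (Function.iterate_succ_apply' Ψ m z).symm
        rw [hZm m, hit]
        exact (Finset.mem_filter.1 hj).2
      have := hkeymin (fun i => Ψ^[m] z i - p i) αl hvle j hjeq k hrk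
      exact Finset.mem_filter.2 ⟨Finset.mem_univ k, this⟩
    have hdisj : ∀ m j, j ∈ T m → j ∉ S m := by
      intro m j hjT hjS
      have h1 := (Finset.mem_filter.1 hjT).2
      have h2 := (Finset.mem_filter.1 hjS).2
      rw [h1] at h2
      exact absurd h2 (ne_of_gt hlt)
    by_cases hcase : ∀ m, j₀ ∈ T m
    · exact kill hirr hj₀r S hSne hSstep ⟨0, fun h => hdisj 0 j₀ (hcase 0) h⟩
    · push_neg at hcase
      exact kill hirr hj₀r T hTne hTstep hcase
  -- convergence of the orbit
  refine ⟨fun j => p j + βl, ?_, ?_⟩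
  · exact hΨplus βl
  · rw [tendsto_pi_nhds]
    intro j
    have hg : Tendsto (fun n => p j + a n) atTop (nhds (p j + βl)) := by
      rw [← hmain] at *
      exact tendsto_const_nhds.add halim
    have hh : Tendsto (fun n => p j + b n) atTop (nhds (p j + βl)) :=
      tendsto_const_nhds.add hblim
    apply tendsto_of_tendsto_of_tendsto_of_le_of_le hg hh
    · intro n
      have := hαf_le (W n) j
      simp only []
      linarith
    · intro n
      have := hβf_le (W n) j
      simp only []
      linarith

lemma Phi_cont {u : Fin N → ℝ} {F : (Fin N → ℝ) → (Fin N → ℝ)}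
    (hC1 : ContDiffOn ℝ 1 F (PosOrth N)) (hmap : ∀ x ∈ PosOrth N, F x ∈ PosOrth N) :
    Continuous (Phi u F) :=
  continuous_iff_continuousAt.2 fun w =>
    (hasFDerivAt_Phi (u := u) hC1 hmap w).differentiableAt.continuousAt

lemma Epos_cont (u : Fin N → ℝ) : Continuous (Epos u) :=
  continuous_pi fun i => Real.continuous_exp.comp (continuous_const.mul (continuous_apply i))

lemma Lg_contAt (u : Fin N → ℝ) {y : Fin N → ℝ} (hy : y ∈ PosOrth N) :
    ContinuousAt (Lg u) y := by
  rw [continuousAt_pi]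
  intro i
  have h1 : ContinuousAt (fun x : Fin N → ℝ => Real.log (x i)) y :=
    ContinuousAt.log ((continuous_apply i).continuousAt) (ne_of_gt (hy i))
  exact h1.div_const (u i)

lemma F_Epos {u : Fin N → ℝ} {F : (Fin N → ℝ) → (Fin N → ℝ)} (hu0 : ∀ j, u j ≠ 0)
    (hmap : ∀ x ∈ PosOrth N, F x ∈ PosOrth N) (w : Fin N → ℝ) :
    F (Epos u w) = Epos u (Phi u F w) := by
  show F (Epos u w) = Epos u (Lg u (F (Epos u w)))
  rw [Epos_Lg hu0 (hmap _ (Epos_mem u w))]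

lemma iter_conj {u : Fin N → ℝ} {F : (Fin N → ℝ) → (Fin N → ℝ)} (hu0 : ∀ j, u j ≠ 0)
    (hmap : ∀ x ∈ PosOrth N, F x ∈ PosOrth N) {x : Fin N → ℝ} (hx : x ∈ PosOrth N) :
    ∀ n : ℕ, F^[n] x = Epos u ((Phi u F)^[n] (Lg u x)) := by
  intro n
  induction n with
  | zero => simp [Epos_Lg hu0 hx]
  | succ n ih =>
      rw [Function.iterate_succ_apply', ih, F_Epos hu0 hmap, Function.iterate_succ_apply']

end StabAux

/-- **Main theorem, part (ii) (Lyapunov stability and attractivity).**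
If `F : ℝ^N_{++} → ℝ^N_{++}` is continuously differentiable, connects all variables,
scales with exponent `u ≠ 0`, its monotonicity behavior is consistent with `u`, `F`
exhibits self-interaction, and the fixed point equation `x = F(x)` has a solution
`x* ∈ ℝ^N_{++}`, then every solution of `x = F(x)` is Lyapunov stable and for every
`x ∈ ℝ^N_{++}` the iterates `F^n(x)` converge to a solution of `x = F(x)`. -/
theorem stability_and_attractivity
    {N : ℕ} (hN : 1 ≤ N) (u : Fin N → ℝ) (hu : u ≠ 0)
    (F : (Fin N → ℝ) → (Fin N → ℝ))
    (hmap : ∀ x ∈ PosOrth N, F x ∈ PosOrth N)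
    (hC1 : ContDiffOn ℝ 1 F (PosOrth N))
    (hconn : ∀ x ∈ PosOrth N, MatIrred (Matrix.of fun j k => |Jac F x j k|))
    (hscale : ∀ x ∈ PosOrth N, ∀ c : ℝ, 0 < c → F (pscale c u x) = pscale c u (F x))
    (hmono : MonoConsistent F u)
    (hself : ∀ x ∈ PosOrth N, ∃ j, Jac F x j j ≠ 0)
    (xstar : Fin N → ℝ) (hxstar : xstar ∈ PosOrth N) (hfix : F xstar = xstar) :
    (∀ y ∈ PosOrth N, F y = y →
      ∀ ε > (0 : ℝ), ∃ δ > (0 : ℝ), ∀ x ∈ PosOrth N, ‖x - y‖ < δ →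
        ∀ n : ℕ, ‖F^[n] x - F^[n] y‖ < ε) ∧
    (∀ x ∈ PosOrth N, ∃ y, y ∈ PosOrth N ∧ F y = y ∧
      Tendsto (fun n => F^[n] x) atTop (nhds y)) := by
  classical
  obtain ⟨ζ, hζp, hζm, hJ⟩ := hmono
  have heuler : ∀ x ∈ PosOrth N, ∀ j, ∑ k, (u k * x k) * Jac F x j k = u j * F x j :=
    fun x hx j => StabAux.euler hC1 hscale hx j
  have hu0 : ∀ j, u j ≠ 0 :=
    StabAux.u_ne_zero hu hζp hζm hJ hxstar (heuler xstar hxstar) (hconn xstar hxstar)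
  have hζp' : ∀ j, ζ j = true → 0 < u j := fun j h =>
    lt_of_le_of_ne (hζp j h) (Ne.symm (hu0 j))
  have hζm' : ∀ j, ζ j = false → u j < 0 := fun j h =>
    lt_of_le_of_ne (hζm j h) (hu0 j)
  have hnn : ∀ w j k, 0 ≤ StabAux.DPhi u F w (Pi.single k 1) j :=
    fun w j k => StabAux.DPhi_entry_nonneg hmap hζp' hζm' hJ w j k
  have hrow : ∀ w j, ∑ k, StabAux.DPhi u F w (Pi.single k 1) j = 1 :=
    fun w j => StabAux.DPhi_row_sum hC1 hmap hu0 hscale w j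
  have hΨmono : Monotone (StabAux.Phi u F) := StabAux.Phi_mono hC1 hmap hnn
  have hΨhom := StabAux.Phi_hom (u := u) (F := F) hu0 hmap hscale
  have hΨcont := StabAux.Phi_cont (u := u) hC1 hmap
  constructor
  · -- Lyapunov stability
    intro y hy hyfix ε hε
    set q := StabAux.Lg u y with hqdef
    have hEq : StabAux.Epos u q = y := StabAux.Epos_Lg hu0 hy
    have hqfix : StabAux.Phi u F q = q := by
      show StabAux.Lg u (F (StabAux.Epos u q)) = q
      rw [hEq, hyfix]
    have hEcont : ContinuousAt (StabAux.Epos u) q := (StabAux.Epos_cont u).continuousAt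
    obtain ⟨η, hη, hball⟩ := Metric.continuousAt_iff.1 hEcont ε hε
    obtain ⟨δ, hδ, hball2⟩ := Metric.continuousAt_iff.1 (StabAux.Lg_contAt u hy) η hη
    refine ⟨δ, hδ, ?_⟩
    intro x hx hxy n
    have hFy : F^[n] y = y := Function.iterate_fixed hyfix n
    have hFx : F^[n] x = StabAux.Epos u ((StabAux.Phi u F)^[n] (StabAux.Lg u x)) :=
      StabAux.iter_conj hu0 hmap hx n
    have h1 : dist (StabAux.Lg u x) q < η := by
      apply hball2
      rw [dist_eq_norm]
      exact hxy
    have h2 : ‖(StabAux.Phi u F)^[n] (StabAux.Lg u x) - q‖ ≤ ‖StabAux.Lg u x - q‖ :=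
      StabAux.iter_norm_le hΨmono hΨhom hqfix (StabAux.Lg u x) n
    have h3 : dist ((StabAux.Phi u F)^[n] (StabAux.Lg u x)) q < η := by
      rw [dist_eq_norm]
      rw [dist_eq_norm] at h1
      exact lt_of_le_of_lt h2 h1
    have h4 := hball h3
    rw [hEq] at h4
    rw [hFx, hFy, ← dist_eq_norm]
    exact h4
  · -- convergence of iterates
    intro x hx
    set p := StabAux.Lg u xstar with hpdef
    have hpE : StabAux.Epos u p = xstar := StabAux.Epos_Lg hu0 hxstar
    have hpfix : StabAux.Phi u F p = p := by
      show StabAux.Lg u (F (StabAux.Epos u p)) = p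
      rw [hpE, hfix]
    have hBiff : ∀ j k, StabAux.DPhi u F p (Pi.single k 1) j ≠ 0 ↔ Jac F xstar j k ≠ 0 := by
      intro j k
      rw [StabAux.DPhi_single, hpE, hfix]
      constructor
      · intro h hc
        apply h
        rw [hc]
        ring
      · intro h
        exact mul_ne_zero (inv_ne_zero (mul_ne_zero (hu0 j) (ne_of_gt (hxstar j))))
          (mul_ne_zero (mul_ne_zero (hu0 k) (ne_of_gt (hxstar k))) h)
    have hirr : ∀ a b : Fin N,
        Relation.TransGen (fun k j => Jac F xstar j k ≠ 0) a b := by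
      intro a b
      refine Relation.TransGen.mono ?_ a b (hconn xstar hxstar a b)
      intro k j h
      exact abs_ne_zero.mp h
    have hdiag : ∃ j₀, Jac F xstar j₀ j₀ ≠ 0 := hself xstar hxstar
    have hkeymax : ∀ (v : Fin N → ℝ) (β : ℝ), (∀ k, v k ≤ β) →
        ∀ j, StabAux.Phi u F (fun i => p i + v i) j - p j = β →
        ∀ k, Jac F xstar j k ≠ 0 → v k = β := by
      intro v β hv j hj k hrk
      have hj' : StabAux.Phi u F (fun i => p i + v i) j - StabAux.Phi u F p j = β := by
        rw [hpfix]; exact hj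
      exact StabAux.key_max hC1 hmap hnn hrow p v β hv j hj' k ((hBiff j k).2 hrk)
    have hkeymin : ∀ (v : Fin N → ℝ) (α : ℝ), (∀ k, α ≤ v k) →
        ∀ j, StabAux.Phi u F (fun i => p i + v i) j - p j = α →
        ∀ k, Jac F xstar j k ≠ 0 → v k = α := by
      intro v α hv j hj k hrk
      have hj' : StabAux.Phi u F (fun i => p i + v i) j - StabAux.Phi u F p j = α := by
        rw [hpfix]; exact hj
      exact StabAux.key_min hC1 hmap hnn hrow p v α hv j hj' k ((hBiff j k).2 hrk)
    obtain ⟨q, hqfix, hqlim⟩ := StabAux.abstract_convergence hN hΨcont hΨmono hΨhom hpfix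
      hirr hdiag hkeymax hkeymin (StabAux.Lg u x)
    refine ⟨StabAux.Epos u q, StabAux.Epos_mem u q, ?_, ?_⟩
    · rw [StabAux.F_Epos hu0 hmap, hqfix]
    · have hconj : (fun n => F^[n] x)
          = fun n => StabAux.Epos u ((StabAux.Phi u F)^[n] (StabAux.Lg u x)) :=
        funext fun n => StabAux.iter_conj hu0 hmap hx n
      rw [hconj]
      exact ((StabAux.Epos_cont u).tendsto q).comp hqlim
end

section
/- Let A, B ∈ ℝ^{N×N} with |A| ≤ B entrywise, assume B is irreducible, and let u ∈ ℝ^N be a nonzero vector with Au = u. Then the following assertions are equivalent: (i) the spectral radius of B equals 1; (ii) B|u| = |u|; (iii) there exists a nonzero entrywise nonnegative vector v ∈ ℝ^N with Bv = v. -/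
open Filter

/-- The spectral radius of a real matrix: the maximum of the absolute values of its
complex eigenvalues. -/
noncomputable def specRad {N : ℕ} (M : Matrix (Fin N) (Fin N) ℝ) : ℝ :=
  sSup ((fun z : ℂ => ‖z‖) '' spectrum ℂ (M.map Complex.ofReal))

section DominationAux

attribute [local instance] Matrix.linftyOpNormedRing Matrix.linftyOpNormedAlgebra

noncomputable local instance matComplete {N : ℕ} : CompleteSpace (Matrix (Fin N) (Fin N) ℂ) :=
  inferInstance

variable {N : ℕ} {B : Matrix (Fin N) (Fin N) ℝ}

private theorem mulVec_mono' (hB : ∀ j k, 0 ≤ B j k) {x y : Fin N → ℝ} (h : ∀ i, x i ≤ y i)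
    (i : Fin N) : (B.mulVec x) i ≤ (B.mulVec y) i := by
  simp only [Matrix.mulVec, dotProduct]
  exact Finset.sum_le_sum fun k _ => mul_le_mul_of_nonneg_left (h k) (hB i k)

private theorem mulVec_nonneg' (hB : ∀ j k, 0 ≤ B j k) {x : Fin N → ℝ} (hx : ∀ i, 0 ≤ x i)
    (i : Fin N) : 0 ≤ (B.mulVec x) i := by
  simpa [Matrix.mulVec_zero] using mulVec_mono' hB (fun i => hx i) i (x := 0)

private theorem pow_entry_nonneg (hB : ∀ j k, 0 ≤ B j k) (m : ℕ) (i j : Fin N) :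
    0 ≤ (B ^ m) i j := by
  induction m generalizing i j with
  | zero => by_cases h : i = j <;> simp [pow_zero, Matrix.one_apply, h]
  | succ m ih =>
    rw [pow_succ, Matrix.mul_apply]
    exact Finset.sum_nonneg fun k _ => mul_nonneg (ih i k) (hB k j)

private theorem step_ge (hB : ∀ j k, 0 ≤ B j k) {x : Fin N → ℝ} (hx : ∀ i, 0 ≤ x i) (j : Fin N) :
    x j ≤ ((1 + B).mulVec x) j := by
  rw [Matrix.add_mulVec, Matrix.one_mulVec]
  simpa using mulVec_nonneg' hB hx j

private theorem step_pos (hB : ∀ j k, 0 ≤ B j k) {x : Fin N → ℝ} (hx : ∀ i, 0 ≤ x i) {j k : Fin N}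
    (hjk : B j k ≠ 0) (hk : 0 < x k) : 0 < ((1 + B).mulVec x) j := by
  rw [Matrix.add_mulVec, Matrix.one_mulVec]
  have h1 : 0 < B j k * x k := mul_pos ((hB j k).lt_of_ne (Ne.symm hjk)) hk
  have h2 : B j k * x k ≤ (B.mulVec x) j :=
    Finset.single_le_sum (f := fun k => B j k * x k)
      (fun k _ => mul_nonneg (hB j k) (hx k)) (Finset.mem_univ k)
  have := hx j
  simp only [Pi.add_apply]
  linarith

private theorem iter_nonneg (hB : ∀ j k, 0 ≤ B j k) {x : Fin N → ℝ} (hx : ∀ i, 0 ≤ x i) (m : ℕ)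
    (i : Fin N) : 0 ≤ (((1 + B) ^ m).mulVec x) i := by
  induction m generalizing i with
  | zero => simpa [pow_zero, Matrix.one_mulVec] using hx i
  | succ m ih =>
    rw [pow_succ', ← Matrix.mulVec_mulVec]
    exact le_trans (ih i) (step_ge hB ih i)

private theorem iter_mono (hB : ∀ j k, 0 ≤ B j k) {x : Fin N → ℝ} (hx : ∀ i, 0 ≤ x i) (i : Fin N) :
    Monotone fun m => (((1 + B) ^ m).mulVec x) i := by
  apply monotone_nat_of_le_succ
  intro m
  rw [pow_succ', ← Matrix.mulVec_mulVec]
  exact step_ge hB (iter_nonneg hB hx m) i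

private theorem iter_event_pos (hB : ∀ j k, 0 ≤ B j k) (hirr : ∀ a b : Fin N,
      Relation.TransGen (fun k j => B j k ≠ 0) a b)
    {x : Fin N → ℝ} (hx : ∀ i, 0 ≤ x i) (hx0 : x ≠ 0) :
    ∃ m, ∀ b, 0 < (((1 + B) ^ m).mulVec x) b := by
  obtain ⟨a, ha⟩ : ∃ a, 0 < x a := by
    by_contra h
    push_neg at h
    exact hx0 (funext fun i => le_antisymm (h i) (hx i))
  have key : ∀ b, ∃ m, 0 < (((1 + B) ^ m).mulVec x) b := by
    intro b
    have h := hirr a b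
    induction h with
    | single hr =>
      refine ⟨1, ?_⟩
      rw [pow_one]
      exact step_pos hB hx hr ha
    | tail hab hr ih =>
      obtain ⟨m, hm⟩ := ih
      refine ⟨m + 1, ?_⟩
      rw [pow_succ', ← Matrix.mulVec_mulVec]
      exact step_pos hB (iter_nonneg hB hx m) hr hm
  choose f hf using key
  refine ⟨Finset.univ.sup f, fun b => lt_of_lt_of_le (hf b) ?_⟩
  exact iter_mono hB hx b (Finset.le_sup (Finset.mem_univ b))

private theorem algMulVec (lam : ℂ) (x : Fin N → ℂ) :
    (algebraMap ℂ (Matrix (Fin N) (Fin N) ℂ) lam).mulVec x = lam • x := by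
  rw [Algebra.algebraMap_eq_smul_one, Matrix.smul_mulVec, Matrix.one_mulVec]

private theorem specIff (M : Matrix (Fin N) (Fin N) ℂ) (lam : ℂ) :
    lam ∈ spectrum ℂ M ↔ ∃ x, x ≠ 0 ∧ M.mulVec x = lam • x := by
  rw [spectrum.mem_iff, Matrix.isUnit_iff_isUnit_det, isUnit_iff_ne_zero, not_not,
    ← Matrix.exists_mulVec_eq_zero_iff]
  constructor
  · rintro ⟨x, hx, hx0⟩
    refine ⟨x, hx, ?_⟩
    rw [Matrix.sub_mulVec, algMulVec, sub_eq_zero] at hx0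
    exact hx0.symm
  · rintro ⟨x, hx, hx0⟩
    exact ⟨x, hx, by rw [Matrix.sub_mulVec, algMulVec, hx0, sub_self]⟩

private theorem invariant_pos (hBnn : ∀ j k, 0 ≤ B j k)
    (hirr : ∀ a b : Fin N, Relation.TransGen (fun k j => B j k ≠ 0) a b)
    {v : Fin N → ℝ} (hv : ∀ i, 0 ≤ v i) (hv0 : v ≠ 0) (hBv : B.mulVec v = v) (i : Fin N) :
    0 < v i := by
  rcases (hv i).lt_or_eq with h | h
  · exact h
  exfalso
  have edgeZero : ∀ {j k}, B j k ≠ 0 → v j = 0 → v k = 0 := by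
    intro j k hjk hj
    have hsum : ∑ k', B j k' * v k' = 0 := by
      have := congrFun hBv j
      simpa [Matrix.mulVec, dotProduct, hj] using this
    have := (Finset.sum_eq_zero_iff_of_nonneg
      (fun k' _ => mul_nonneg (hBnn j k') (hv k'))).mp hsum k (Finset.mem_univ k)
    rcases mul_eq_zero.mp this with h' | h'
    · exact absurd h' hjk
    · exact h'
  have key : ∀ a, v a = 0 := by
    intro a
    have h' := hirr a i
    induction h' with
    | single hr => exact edgeZero hr h.symm
    | tail hab hr ih => exact ih (edgeZero hr h.symm).symm
  exact hv0 (funext key)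

private theorem one_mem_spec {v : Fin N → ℝ} (hv : ∀ i, 0 < v i) (hBv : B.mulVec v = v)
    (hN : N ≠ 0) : (1 : ℂ) ∈ spectrum ℂ (B.map Complex.ofReal) := by
  haveI : NeZero N := ⟨hN⟩
  rw [specIff]
  refine ⟨fun i => (v i : ℂ), ?_, ?_⟩
  · intro h
    have := congrFun h (0 : Fin N)
    simp only [Pi.zero_apply, Complex.ofReal_eq_zero] at this
    exact (hv 0).ne' this
  · funext j
    have := congrFun hBv j
    simp only [Matrix.mulVec, dotProduct, Matrix.map_apply] at this ⊢
    simp only [one_smul]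
    exact_mod_cast congrArg (Complex.ofReal) this

private theorem abs_le_one_of_pos_eigen {v : Fin N → ℝ} (hBnn : ∀ j k, 0 ≤ B j k)
    (hv : ∀ i, 0 < v i) (hBv : B.mulVec v = v) (hN : N ≠ 0)
    {lam : ℂ} (hlam : lam ∈ spectrum ℂ (B.map Complex.ofReal)) : ‖lam‖ ≤ 1 := by
  haveI : NeZero N := ⟨hN⟩
  obtain ⟨x, hx, hMx⟩ := (specIff _ _).mp hlam
  obtain ⟨i₀, -, hmax⟩ := Finset.exists_max_image Finset.univ
    (fun i => ‖x i‖ / v i) ⟨0, Finset.mem_univ 0⟩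
  set t := ‖x i₀‖ / v i₀ with ht
  have habs : ∀ k, ‖x k‖ ≤ t * v k := fun k =>
    (div_le_iff₀ (hv k)).mp (by simpa [mul_comm] using hmax k (Finset.mem_univ k))
  have tpos : 0 < t := by
    obtain ⟨k, hk⟩ : ∃ k, x k ≠ 0 := by
      by_contra h
      push_neg at h
      exact hx (funext h)
    calc (0:ℝ) < ‖x k‖ / v k :=
          div_pos (norm_pos_iff.mpr hk) (hv k)
      _ ≤ t := hmax k (Finset.mem_univ k)
  have hxi0 : t * v i₀ = ‖x i₀‖ := div_mul_cancel₀ _ (hv i₀).ne'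
  have main : ‖lam‖ * ‖x i₀‖ ≤ t * v i₀ := by
    have h1 : ‖lam‖ * ‖x i₀‖ = ‖(lam • x) i₀‖ := by
      simp [norm_mul]
    rw [h1, ← hMx]
    have h0 : ((B.map Complex.ofReal).mulVec x) i₀ = ∑ k, (B.map Complex.ofReal) i₀ k * x k := by
      simp [Matrix.mulVec, dotProduct]
    calc ‖((B.map Complex.ofReal).mulVec x) i₀‖
        ≤ ∑ k, ‖(B.map Complex.ofReal) i₀ k * x k‖ := by
          rw [h0]; exact norm_sum_le _ _
      _ = ∑ k, B i₀ k * ‖x k‖ := by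
          refine Finset.sum_congr rfl fun k _ => ?_
          rw [norm_mul]
          simp [Matrix.map_apply, abs_of_nonneg (hBnn i₀ k)]
      _ ≤ ∑ k, B i₀ k * (t * v k) :=
          Finset.sum_le_sum fun k _ => mul_le_mul_of_nonneg_left (habs k) (hBnn i₀ k)
      _ = t * (B.mulVec v) i₀ := by
          simp only [Matrix.mulVec, dotProduct, Finset.mul_sum]
          exact Finset.sum_congr rfl fun k _ => by ring
      _ = t * v i₀ := by rw [hBv]
  rw [← hxi0] at main
  have hpos : 0 < t * v i₀ := mul_pos tpos (hv i₀)
  exact le_of_mul_le_mul_right (by linarith) hpos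

private theorem specRad_eq_one' (hBnn : ∀ j k, 0 ≤ B j k) {v : Fin N → ℝ}
    (hv : ∀ i, 0 < v i) (hBv : B.mulVec v = v) (hN : N ≠ 0) : specRad B = 1 := by
  have hub : ∀ s ∈ (fun z : ℂ => ‖z‖) '' spectrum ℂ (B.map Complex.ofReal), s ≤ 1 := by
    rintro s ⟨lam, hlam, rfl⟩
    exact abs_le_one_of_pos_eigen hBnn hv hBv hN hlam
  have hmem : (1:ℝ) ∈ (fun z : ℂ => ‖z‖) '' spectrum ℂ (B.map Complex.ofReal) :=
    ⟨1, one_mem_spec hv hBv hN, by simp⟩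
  exact le_antisymm (csSup_le ⟨1, hmem⟩ hub) (le_csSup ⟨1, hub⟩ hmem)

private theorem mapPow (M : Matrix (Fin N) (Fin N) ℝ) (n : ℕ) :
    (M.map Complex.ofReal) ^ n = (M ^ n).map Complex.ofReal := by
  induction n with
  | zero => simp [Matrix.map_one]
  | succ n ih => rw [pow_succ, pow_succ, ih]; ext i j; simp [Matrix.mul_apply]

private theorem rowsum_le_norm (M' : Matrix (Fin N) (Fin N) ℂ) (i : Fin N) :
    ∑ j, ‖M' i j‖ ≤ ‖M'‖ := by
  have h2 : (∑ j, ‖M' i j‖₊) ≤ ‖M'‖₊ := by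
    rw [Matrix.linfty_opNNNorm_def]
    exact Finset.le_sup (f := fun i => ∑ j, ‖M' i j‖₊) (Finset.mem_univ i)
  calc ∑ j, ‖M' i j‖ = ((∑ j, ‖M' i j‖₊ : NNReal) : ℝ) := by push_cast; rfl
    _ ≤ ‖M'‖ := h2

private theorem specRad_lower (hbig : ∃ δ : ℝ, 1 < δ ∧
      ∀ᶠ m : ℕ in atTop, 1 ≤ m ∧ δ ^ m ≤ ‖(B.map Complex.ofReal) ^ m‖) :
    ¬ specRad B = 1 := by
  intro hspec
  obtain ⟨δ, hδ, hev⟩ := hbig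
  set M := B.map Complex.ofReal
  have hub : spectralRadius ℂ M ≤ 1 := by
    rw [spectralRadius]
    refine iSup₂_le fun k hk => ?_
    have h1 : ‖k‖ ≤ specRad B := by
      refine le_csSup ?_ ⟨k, hk, rfl⟩
      exact ((spectrum.isCompact M).image continuous_norm).bddAbove
    rw [hspec] at h1
    have h2 : ‖k‖₊ ≤ 1 := by
      rw [← NNReal.coe_le_coe]
      simpa using h1
    exact_mod_cast h2
  have hlow : (δ.toNNReal : ENNReal) ≤ spectralRadius ℂ M := by
    refine ge_of_tendsto (spectrum.pow_nnnorm_pow_one_div_tendsto_nhds_spectralRadius M) ?_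
    filter_upwards [hev] with m hm
    obtain ⟨hm1, hm2⟩ := hm
    have hδ0 : (0:ℝ) ≤ δ := by linarith
    have hnn : δ.toNNReal ^ m ≤ ‖M ^ m‖₊ := by
      rw [← Real.toNNReal_pow hδ0]
      exact Real.toNNReal_le_iff_le_coe.mpr (by simpa using hm2)
    have hcoe : ((δ.toNNReal : ENNReal)) ^ m ≤ (‖M ^ m‖₊ : ENNReal) := by
      exact_mod_cast hnn
    have hm0 : (m : ℝ) ≠ 0 := Nat.cast_ne_zero.mpr (by omega)
    calc (δ.toNNReal : ENNReal)
        = (((δ.toNNReal : ENNReal)) ^ (m:ℕ)) ^ ((1:ℝ)/m) := by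
          rw [← ENNReal.rpow_natCast _ m, ← ENNReal.rpow_mul, mul_one_div_cancel hm0,
            ENNReal.rpow_one]
      _ ≤ (‖M ^ m‖₊ : ENNReal) ^ ((1:ℝ)/m) :=
          ENNReal.rpow_le_rpow hcoe (by positivity)
  have hle1 : (δ.toNNReal : ENNReal) ≤ 1 := hlow.trans hub
  rw [ENNReal.coe_le_one_iff] at hle1
  have h2 : δ ≤ (δ.toNNReal : ℝ) := Real.le_coe_toNNReal δ
  have h3 : ((δ.toNNReal : ℝ)) ≤ 1 := by exact_mod_cast hle1
  linarith

private theorem subinv_invariant (hBnn : ∀ j k, 0 ≤ B j k)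
    (hirr : ∀ a b : Fin N, Relation.TransGen (fun k j => B j k ≠ 0) a b)
    {y : Fin N → ℝ} (hy : ∀ i, 0 ≤ y i) (hy0 : y ≠ 0)
    (hsub : ∀ i, y i ≤ (B.mulVec y) i) (hspec : specRad B = 1) (hN : N ≠ 0) :
    B.mulVec y = y := by
  haveI : NeZero N := ⟨hN⟩
  by_contra hne
  set w := B.mulVec y - y with hwdef
  have hwnn : ∀ i, 0 ≤ w i := fun i => by
    have := hsub i
    simp only [hwdef, Pi.sub_apply]
    linarith
  have hw0 : w ≠ 0 := fun h => hne (sub_eq_zero.mp h)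
  obtain ⟨m1, hm1⟩ := iter_event_pos hBnn hirr hy hy0
  obtain ⟨m2, hm2⟩ := iter_event_pos hBnn hirr hwnn hw0
  set M0 := max m1 m2 with hM0
  set z := (((1 + B) ^ M0).mulVec y) with hz
  have hzpos : ∀ b, 0 < z b := fun b =>
    lt_of_lt_of_le (hm1 b) (iter_mono hBnn hy b (le_max_left m1 m2))
  have hwz : ∀ b, 0 < (((1 + B) ^ M0).mulVec w) b := fun b =>
    lt_of_lt_of_le (hm2 b) (iter_mono hBnn hwnn b (le_max_right m1 m2))
  have hcomm : B * (1 + B) ^ M0 = (1 + B) ^ M0 * B :=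
    (((Commute.one_right B).add_right (Commute.refl B)).pow_right M0).eq
  have hBz : B.mulVec z = ((1 + B) ^ M0).mulVec (B.mulVec y) := by
    rw [hz, Matrix.mulVec_mulVec, hcomm, ← Matrix.mulVec_mulVec]
  have hgap : ∀ i, z i < (B.mulVec z) i := by
    intro i
    have h1 : (B.mulVec z) i - z i = (((1 + B) ^ M0).mulVec w) i := by
      rw [hBz, hz, hwdef, Matrix.mulVec_sub]
      simp [Pi.sub_apply]
    have := hwz i
    linarith
  have hne' : (Finset.univ : Finset (Fin N)).Nonempty := Finset.univ_nonempty
  set ζ := Finset.univ.sup' hne' z with hζdef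
  set δ := Finset.univ.inf' hne' (fun i => (B.mulVec z) i - z i) with hδdef
  have hδ : 0 < δ := (Finset.lt_inf'_iff _).mpr fun i _ => by linarith [hgap i]
  have hζ : 0 < ζ :=
    lt_of_lt_of_le (hzpos (0 : Fin N)) (Finset.le_sup' z (Finset.mem_univ 0))
  set ε := δ / ζ with hεdef
  have hε : 0 < ε := div_pos hδ hζ
  have h1ε : (0:ℝ) < 1 + ε := by linarith
  have key : ∀ i, (1 + ε) * z i ≤ (B.mulVec z) i := by
    intro i
    have h1 : z i ≤ ζ := Finset.le_sup' z (Finset.mem_univ i)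
    have h2 : δ ≤ (B.mulVec z) i - z i :=
      Finset.inf'_le (fun i => (B.mulVec z) i - z i) (Finset.mem_univ i)
    have h3 : ε * z i ≤ ε * ζ := mul_le_mul_of_nonneg_left h1 hε.le
    have h4 : ε * ζ = δ := div_mul_cancel₀ _ hζ.ne'
    nlinarith
  have grow : ∀ m i, (1 + ε) ^ m * z i ≤ ((B ^ m).mulVec z) i := by
    intro m
    induction m with
    | zero => intro i; simp [Matrix.one_mulVec]
    | succ m ih =>
      intro i
      have hstep : ((B ^ (m+1)).mulVec z) i = (B.mulVec ((B ^ m).mulVec z)) i :=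
        congrFun ((Matrix.mulVec_mulVec z B (B ^ m)).trans
          (congrFun (congrArg Matrix.mulVec (pow_succ' B m).symm) z)).symm i
      have h1 : (B.mulVec (fun k => (1 + ε) ^ m * z k)) i ≤ (B.mulVec ((B ^ m).mulVec z)) i :=
        mulVec_mono' hBnn ih i
      have h2 : (B.mulVec (fun k => (1 + ε) ^ m * z k)) i = (1 + ε) ^ m * (B.mulVec z) i := by
        simp only [Matrix.mulVec, dotProduct, Finset.mul_sum]
        exact Finset.sum_congr rfl fun k _ => by ring
      have h4 : (1 + ε) ^ m * ((1 + ε) * z i) ≤ (1 + ε) ^ m * (B.mulVec z) i :=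
        mul_le_mul_of_nonneg_left (key i) (pow_nonneg h1ε.le m)
      calc (1 + ε) ^ (m+1) * z i = (1 + ε) ^ m * ((1 + ε) * z i) := by ring
        _ ≤ (1 + ε) ^ m * (B.mulVec z) i := h4
        _ = (B.mulVec (fun k => (1 + ε) ^ m * z k)) i := h2.symm
        _ ≤ (B.mulVec ((B ^ m).mulVec z)) i := h1
        _ = ((B ^ (m+1)).mulVec z) i := hstep.symm
  set zmin := Finset.univ.inf' hne' z with hzmindef
  have hzmin : 0 < zmin := (Finset.lt_inf'_iff _).mpr fun i _ => hzpos i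
  set c := zmin / ζ with hcdef
  have hcpos : 0 < c := div_pos hzmin hζ
  have hrowsum : ∀ m, c * (1 + ε) ^ m ≤ ∑ j, (B ^ m) (0 : Fin N) j := by
    intro m
    have h1 : (1 + ε) ^ m * zmin ≤ ((B ^ m).mulVec z) 0 :=
      le_trans (mul_le_mul_of_nonneg_left (Finset.inf'_le z (Finset.mem_univ 0))
        (pow_nonneg h1ε.le m)) (grow m 0)
    have h2 : ((B ^ m).mulVec z) 0 ≤ (∑ j, (B ^ m) (0 : Fin N) j) * ζ := by
      rw [Finset.sum_mul]
      simp only [Matrix.mulVec, dotProduct]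
      exact Finset.sum_le_sum fun j _ => mul_le_mul_of_nonneg_left
        (Finset.le_sup' z (Finset.mem_univ j)) (pow_entry_nonneg hBnn m 0 j)
    rw [hcdef, div_mul_eq_mul_div, div_le_iff₀ hζ]
    calc zmin * (1 + ε) ^ m = (1 + ε) ^ m * zmin := by ring
      _ ≤ ((B ^ m).mulVec z) 0 := h1
      _ ≤ (∑ j, (B ^ m) (0 : Fin N) j) * ζ := h2
  have hnorm : ∀ m, c * (1 + ε) ^ m ≤ ‖(B.map Complex.ofReal) ^ m‖ := by
    intro m
    rw [mapPow]
    refine le_trans ?_ (rowsum_le_norm ((B ^ m).map Complex.ofReal) 0)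
    have heq : ∀ j, ‖((B ^ m).map Complex.ofReal) (0 : Fin N) j‖ = (B ^ m) (0 : Fin N) j :=
      fun j => by
        simp [Matrix.map_apply, Complex.norm_real, Real.norm_eq_abs,
          abs_of_nonneg (pow_entry_nonneg hBnn m 0 j)]
    rw [Finset.sum_congr rfl fun j _ => heq j]
    exact hrowsum m
  refine specRad_lower ⟨1 + ε/2, by linarith, ?_⟩ hspec
  have hr0 : (0:ℝ) ≤ (1 + ε/2)/(1 + ε) := by positivity
  have hrlt : (1 + ε/2)/(1 + ε) < 1 := (div_lt_one h1ε).mpr (by linarith)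
  have hev0 : ∀ᶠ m : ℕ in atTop, ((1 + ε/2)/(1 + ε)) ^ m < c :=
    (tendsto_pow_atTop_nhds_zero_of_lt_one hr0 hrlt).eventually_lt_const hcpos
  filter_upwards [hev0, eventually_ge_atTop 1] with m hm hm1
  refine ⟨hm1, ?_⟩
  have heq : (1 + ε/2) ^ m = ((1 + ε/2)/(1 + ε)) ^ m * (1 + ε) ^ m := by
    rw [← mul_pow, div_mul_cancel₀ _ h1ε.ne']
  rw [heq]
  refine le_trans ?_ (hnorm m)
  exact mul_le_mul_of_nonneg_right hm.le (pow_nonneg h1ε.le m)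

end DominationAux

/-- **Domination of matrices (equivalences).** Let `|A| ≤ B` entrywise, `B` irreducible,
and `u ≠ 0` with `Au = u`. Then the following are equivalent:
(i) `ρ(B) = 1`; (ii) `B|u| = |u|`; (iii) there is a nonzero nonnegative `v` with `Bv = v`. -/
theorem domination_equivalences
    {N : ℕ} (A B : Matrix (Fin N) (Fin N) ℝ)
    (hAB : ∀ j k, |A j k| ≤ B j k) (hB : MatIrred B)
    (u : Fin N → ℝ) (hu : u ≠ 0) (hAu : A.mulVec u = u) :
    [specRad B = 1,
     B.mulVec (fun i => |u i|) = (fun i => |u i|),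
     ∃ v : Fin N → ℝ, v ≠ 0 ∧ (∀ i, 0 ≤ v i) ∧ B.mulVec v = v].TFAE := by
  have hN : N ≠ 0 := by
    rintro rfl
    exact hu (funext fun i => i.elim0)
  have hBnn : ∀ j k, 0 ≤ B j k := fun j k => (abs_nonneg _).trans (hAB j k)
  set y : Fin N → ℝ := fun i => |u i| with hy
  have hynn : ∀ i, 0 ≤ y i := fun i => abs_nonneg _
  have hy0 : y ≠ 0 := by
    intro h
    apply hu
    funext i
    have := congrFun h i
    simpa [hy, abs_eq_zero] using this
  have hsub : ∀ j, y j ≤ (B.mulVec y) j := by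
    intro j
    have h1 : y j = |(A.mulVec u) j| := by rw [hAu]
    have h2 : |(A.mulVec u) j| ≤ ∑ k, |A j k * u k| := by
      simp only [Matrix.mulVec, dotProduct]
      exact Finset.abs_sum_le_sum_abs _ _
    have h3 : ∑ k, |A j k * u k| ≤ ∑ k, B j k * y k := by
      refine Finset.sum_le_sum fun k _ => ?_
      rw [abs_mul]
      exact mul_le_mul_of_nonneg_right (hAB j k) (abs_nonneg _)
    calc y j = |(A.mulVec u) j| := h1
      _ ≤ ∑ k, |A j k * u k| := h2
      _ ≤ ∑ k, B j k * y k := h3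
      _ = (B.mulVec y) j := rfl
  tfae_have 1 → 2 := fun hspec => subinv_invariant hBnn hB hynn hy0 hsub hspec hN
  tfae_have 2 → 3 := fun h2 => ⟨y, hy0, hynn, h2⟩
  tfae_have 3 → 1 := by
    rintro ⟨v, hv0, hvnn, hBv⟩
    exact specRad_eq_one' hBnn (invariant_pos hBnn hB hvnn hv0 hBv) hBv hN
  tfae_finish
end

section
/- Let A, B ∈ ℝ^{N×N} with |A| ≤ B entrywise, assume B is irreducible, and let u ∈ ℝ^N be a nonzero vector with Au = u. If B|u| = |u|, then: |A| = B, every entry of u is nonzero, and, setting ζ_+ = { j : u_j > 0 } and ζ_- = { j : u_j < 0 }, one has for all j, k ∈ {1,…,N}: A_{jk} ≥ 0 if j and k both lie in ζ_+ or both lie in ζ_-, and A_{jk} ≤ 0 if j and k lie in different ones of the sets ζ_+, ζ_-. -/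
open Filter

/-- **Domination of matrices (sign structure).** Let `|A| ≤ B` entrywise, `B` irreducible,
`u ≠ 0` with `Au = u`, and `B|u| = |u|`. Then `|A| = B`, every entry of `u` is nonzero,
and, with `ζ_+ = {j | u j > 0}` and `ζ_- = {j | u j < 0}`, one has `A j k ≥ 0` whenever
`j` and `k` lie in the same one of these sets and `A j k ≤ 0` whenever they lie in
different ones. -/
theorem domination_sign_structure
    {N : ℕ} (A B : Matrix (Fin N) (Fin N) ℝ)
    (hAB : ∀ j k, |A j k| ≤ B j k) (hB : MatIrred B)
    (u : Fin N → ℝ) (hu : u ≠ 0) (hAu : A.mulVec u = u)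
    (hBu : B.mulVec (fun i => |u i|) = (fun i => |u i|)) :
    (∀ j k, |A j k| = B j k) ∧ (∀ j, u j ≠ 0) ∧
    (∀ j k, ((0 < u j ∧ 0 < u k) ∨ (u j < 0 ∧ u k < 0)) → 0 ≤ A j k) ∧
    (∀ j k, ((0 < u j ∧ u k < 0) ∨ (u j < 0 ∧ 0 < u k)) → A j k ≤ 0) := by
  have hBv : ∀ j, ∑ k, B j k * |u k| = |u j| := by
    intro j
    have := congrFun hBu j
    simpa [Matrix.mulVec, dotProduct] using this
  have hAv : ∀ j, ∑ k, A j k * u k = u j := by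
    intro j
    have := congrFun hAu j
    simpa [Matrix.mulVec, dotProduct] using this
  -- chain of inequalities, per row j
  have h1 : ∀ j, |u j| ≤ ∑ k, |A j k * u k| := by
    intro j
    rw [← hAv j]
    exact Finset.abs_sum_le_sum_abs _ _
  have h2 : ∀ j, ∑ k, |A j k * u k| ≤ ∑ k, B j k * |u k| := by
    intro j
    apply Finset.sum_le_sum
    intro k _
    rw [abs_mul]
    exact mul_le_mul_of_nonneg_right (hAB j k) (abs_nonneg _)
  have heq1 : ∀ j, ∑ k, |A j k * u k| = |u j| :=
    fun j => le_antisymm (le_of_le_of_eq (h2 j) (hBv j)) (h1 j)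
  have heq2 : ∀ j, ∑ k, B j k * |u k| = ∑ k, |A j k * u k| :=
    fun j => (hBv j).trans (heq1 j).symm
  -- zero entries propagate backwards
  have hzero : ∀ j, u j = 0 → ∀ k, B j k ≠ 0 → u k = 0 := by
    intro j hj k hk
    have hsum : ∑ k, B j k * |u k| = 0 := by rw [hBv j, hj, abs_zero]
    have hterm : B j k * |u k| = 0 := by
      have := (Finset.sum_eq_zero_iff_of_nonneg (fun i _ =>
        mul_nonneg (le_trans (abs_nonneg _) (hAB j i)) (abs_nonneg _))).mp hsum k
        (Finset.mem_univ k)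
      exact this
    rcases mul_eq_zero.mp hterm with h | h
    · exact absurd h hk
    · exact abs_eq_zero.mp h
  have hune : ∀ j, u j ≠ 0 := by
    intro j hj
    apply hu
    funext a
    by_contra ha
    have := hB a j
    have key : ∀ b c : Fin N, Relation.TransGen (fun k j => B j k ≠ 0) b c →
        u c = 0 → u b = 0 := by
      intro b c h
      induction h with
      | single h => exact fun hc => hzero _ hc _ h
      | tail h1 h2 ih => exact fun hc => ih (hzero _ hc _ h2)
    exact ha (key a j this hj)
  -- |A| = B
  have hABeq : ∀ j k, |A j k| = B j k := by
    intro j k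
    have hsum : ∑ i, (B j i * |u i| - |A j i * u i|) = 0 := by
      rw [Finset.sum_sub_distrib, heq2 j, sub_self]
    have hterm := (Finset.sum_eq_zero_iff_of_nonneg (fun i _ => by
      rw [abs_mul]
      exact sub_nonneg.mpr (mul_le_mul_of_nonneg_right (hAB j i) (abs_nonneg _)))).mp
      hsum k (Finset.mem_univ k)
    rw [abs_mul] at hterm
    have huk : |u k| ≠ 0 := fun h => hune k (abs_eq_zero.mp h)
    have : (B j k - |A j k|) * |u k| = 0 := by ring_nf; linarith [hterm]
    rcases mul_eq_zero.mp this with h | h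
    · linarith
    · exact absurd h huk
  -- sign lemma: for each j, all terms A j k * u k share the sign of u j
  have hsign_pos : ∀ j, 0 < u j → ∀ k, 0 ≤ A j k * u k := by
    intro j hj k
    have habs : |u j| = u j := abs_of_pos hj
    have hsum : ∑ i, (|A j i * u i| - A j i * u i) = 0 := by
      rw [Finset.sum_sub_distrib, heq1 j, hAv j, habs, sub_self]
    have := (Finset.sum_eq_zero_iff_of_nonneg (fun i _ =>
      sub_nonneg.mpr (le_abs_self _))).mp hsum k (Finset.mem_univ k)
    have habs2 : |A j k * u k| = A j k * u k := by linarith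
    linarith [abs_nonneg (A j k * u k)]
  have hsign_neg : ∀ j, u j < 0 → ∀ k, A j k * u k ≤ 0 := by
    intro j hj k
    have habs : |u j| = -u j := abs_of_neg hj
    have hsum : ∑ i, (|A j i * u i| + A j i * u i) = 0 := by
      rw [Finset.sum_add_distrib, heq1 j, hAv j, habs]; ring
    have := (Finset.sum_eq_zero_iff_of_nonneg (fun i _ => by
      linarith [neg_abs_le (A j i * u i)])).mp hsum k (Finset.mem_univ k)
    linarith [abs_nonneg (A j k * u k)]
  refine ⟨hABeq, hune, ?_, ?_⟩
  · rintro j k (⟨hj, hk⟩ | ⟨hj, hk⟩)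
    · have := hsign_pos j hj k; nlinarith
    · have := hsign_neg j hj k; nlinarith
  · rintro j k (⟨hj, hk⟩ | ⟨hj, hk⟩)
    · have := hsign_pos j hj k; nlinarith
    · have := hsign_neg j hj k; nlinarith
end

section
/- Let A, B ∈ ℝ^{N×N} with |A| ≤ B entrywise, assume B is irreducible, and let u ∈ ℝ^N be a nonzero vector with Au = u. If B|u| = |u|, then the eigenspace of A for the eigenvalue 1 (taken in ℂ^N) is one-dimensional, and it is spanned by u. -/
open Filter

lemma dom_exists_ratio
    {N : ℕ} (A B : Matrix (Fin N) (Fin N) ℝ)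
    (hAB : ∀ j k, |A j k| ≤ B j k) (hB : MatIrred B)
    (u : Fin N → ℝ) (hupos : ∀ j, u j ≠ 0)
    (hBu : B.mulVec (fun i => |u i|) = (fun i => |u i|))
    (v : Fin N → ℂ) (hv : (A.map Complex.ofReal).mulVec v = v) :
    ∃ t : ℝ, ∀ k, ‖v k‖ = t * |u k| := by
  rcases isEmpty_or_nonempty (Fin N) with hN | hN
  · exact ⟨0, fun k => absurd k.2 (by simp [hN.false k])⟩
  have hBnn : ∀ j k, 0 ≤ B j k := fun j k => (abs_nonneg _).trans (hAB j k)
  have hup : ∀ j, 0 < |u j| := fun j => abs_pos.mpr (hupos j)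
  have hBuj : ∀ j, ∑ m, B j m * |u m| = |u j| := fun j => congrFun hBu j
  obtain ⟨j0, hj0⟩ := Finite.exists_max (fun j => ‖v j‖ / |u j|)
  set t : ℝ := ‖v j0‖ / |u j0| with ht
  have hle : ∀ k, ‖v k‖ ≤ t * |u k| := by
    intro k
    have := hj0 k
    rw [div_le_iff₀ (hup k)] at this
    linarith [this]
  -- |v j| ≤ ∑ m, B j m * |v m|
  have habs : ∀ j, ‖v j‖ ≤ ∑ m, B j m * ‖v m‖ := by
    intro j
    have h1 : (A.map Complex.ofReal).mulVec v j = ∑ m, (A j m : ℂ) * v m := by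
      simp [Matrix.mulVec, dotProduct, Matrix.map_apply]
    calc ‖v j‖ = ‖∑ m, (A j m : ℂ) * v m‖ := by rw [← h1, hv]
      _ ≤ ∑ m, ‖(A j m : ℂ) * v m‖ := norm_sum_le _ _
      _ = ∑ m, |A j m| * ‖v m‖ := by
          simp [norm_mul, Complex.norm_real, Real.norm_eq_abs]
      _ ≤ ∑ m, B j m * ‖v m‖ :=
          Finset.sum_le_sum fun m _ =>
            mul_le_mul_of_nonneg_right (hAB j m) (norm_nonneg _)
  -- propagation
  have hprop : ∀ j k, ‖v j‖ = t * |u j| → B j k ≠ 0 →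
      ‖v k‖ = t * |u k| := by
    intro j k hj hjk
    have hsum : ∑ m, B j m * (t * |u m| - ‖v m‖) = 0 := by
      have h2 : ∑ m, B j m * (t * |u m| - ‖v m‖)
          = t * (∑ m, B j m * |u m|) - ∑ m, B j m * ‖v m‖ := by
        rw [Finset.mul_sum, ← Finset.sum_sub_distrib]
        congr 1; ext m; ring
      have h3 : ∑ m, B j m * (t * |u m| - ‖v m‖) ≤ 0 := by
        rw [h2, hBuj j]; linarith [habs j, hj]
      have h4 : 0 ≤ ∑ m, B j m * (t * |u m| - ‖v m‖) :=
        Finset.sum_nonneg fun m _ =>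
          mul_nonneg (hBnn j m) (by linarith [hle m])
      linarith
    have := (Finset.sum_eq_zero_iff_of_nonneg
      (fun m _ => mul_nonneg (hBnn j m) (by linarith [hle m]))).mp hsum k
      (Finset.mem_univ k)
    have h5 : t * |u k| - ‖v k‖ = 0 := by
      rcases mul_eq_zero.mp this with h | h
      · exact absurd h hjk
      · exact h
    linarith
  refine ⟨t, fun k => ?_⟩
  have hbase : ‖v j0‖ = t * |u j0| := by
    rw [ht, div_mul_cancel₀ _ (ne_of_gt (hup j0))]
  have hpath := hB k j0
  induction hpath using Relation.TransGen.head_induction_on with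
  | single h => exact hprop j0 _ hbase h
  | head h _ ih => exact hprop _ _ ih h

/-- **Domination of matrices (simplicity of the eigenvalue 1).** Let `|A| ≤ B` entrywise,
`B` irreducible, `u ≠ 0` with `Au = u`, and `B|u| = |u|`. Then the eigenspace of `A` for
the eigenvalue `1`, taken in `ℂ^N`, is one-dimensional and spanned by `u`. -/
theorem domination_eigenspace_simple
    {N : ℕ} (A B : Matrix (Fin N) (Fin N) ℝ)
    (hAB : ∀ j k, |A j k| ≤ B j k) (hB : MatIrred B)
    (u : Fin N → ℝ) (hu : u ≠ 0) (hAu : A.mulVec u = u)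
    (hBu : B.mulVec (fun i => |u i|) = (fun i => |u i|)) :
    Module.End.eigenspace (Matrix.toLin' (A.map Complex.ofReal)) 1 =
      Submodule.span ℂ {fun i => (u i : ℂ)} ∧
    Module.finrank ℂ
      (Module.End.eigenspace (Matrix.toLin' (A.map Complex.ofReal)) 1) = 1 := by
  have hBnn : ∀ j k, 0 ≤ B j k := fun j k => (abs_nonneg _).trans (hAB j k)
  have hBuj : ∀ j, ∑ m, B j m * |u m| = |u j| := fun j => congrFun hBu j
  -- all entries of u are nonzero
  have hupos : ∀ j, u j ≠ 0 := by
    have hstep : ∀ a b : Fin N, B b a ≠ 0 → u a ≠ 0 → u b ≠ 0 := by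
      intro a b hba ha
      have h1 : 0 < ∑ m, B b m * |u m| := by
        have : 0 < B b a * |u a| :=
          mul_pos (lt_of_le_of_ne (hBnn b a) (Ne.symm hba)) (abs_pos.mpr ha)
        calc (0:ℝ) < B b a * |u a| := this
          _ ≤ ∑ m, B b m * |u m| :=
            Finset.single_le_sum (fun m _ => mul_nonneg (hBnn b m) (abs_nonneg _))
              (Finset.mem_univ a)
      rw [hBuj b] at h1
      exact fun h => by simp [h] at h1
    intro j
    obtain ⟨k, hk⟩ := Function.ne_iff.mp hu
    have hpath := hB k j
    induction hpath with
    | single h => exact hstep _ _ h hk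
    | tail _ h ih => exact hstep _ _ h ih
  -- u as complex vector is an eigenvector
  have hNne : Nonempty (Fin N) := by
    by_contra h
    exact hu (funext fun i => absurd ⟨i⟩ h)
  set uc : Fin N → ℂ := fun i => (u i : ℂ) with huc
  have hucne : uc ≠ 0 := by
    intro h
    have h2 := congrFun h (Classical.arbitrary (Fin N))
    simp only [huc, Pi.zero_apply, Complex.ofReal_eq_zero] at h2
    exact hupos _ h2
  have hAuc : (A.map Complex.ofReal).mulVec uc = uc := by
    funext j
    have := congrFun hAu j
    simp only [Matrix.mulVec, dotProduct] at this ⊢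
    simp only [Matrix.map_apply, huc]
    exact_mod_cast congrArg Complex.ofReal this
  have hmem : ∀ v : Fin N → ℂ,
      v ∈ Module.End.eigenspace (Matrix.toLin' (A.map Complex.ofReal)) 1 ↔
      (A.map Complex.ofReal).mulVec v = v := by
    intro v
    rw [Module.End.mem_eigenspace_iff, Matrix.toLin'_apply, one_smul]
  have hspan : Module.End.eigenspace (Matrix.toLin' (A.map Complex.ofReal)) 1 =
      Submodule.span ℂ {uc} := by
    apply le_antisymm
    · intro v hv
      rw [hmem] at hv
      -- pick an index
      obtain ⟨i⟩ := hNne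
      set lam : ℂ := v i / (u i : ℂ) with hlam
      set w : Fin N → ℂ := v - lam • uc with hw
      have hAw : (A.map Complex.ofReal).mulVec w = w := by
        rw [hw, Matrix.mulVec_sub, hv]
        congr 1
        rw [Matrix.mulVec_smul, hAuc]
      obtain ⟨s, hs⟩ := dom_exists_ratio A B hAB hB u hupos hBu w hAw
      have hwi : w i = 0 := by
        have hui : (u i : ℂ) ≠ 0 := by exact_mod_cast hupos i
        simp only [hw, Pi.sub_apply, Pi.smul_apply, smul_eq_mul, hlam, huc]
        field_simp
        ring
      have hs0 : s = 0 := by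
        have := hs i
        rw [hwi] at this
        simp at this
        rcases this with h | h
        · exact h
        · exact absurd h (hupos i)
      have hwzero : w = 0 := by
        funext k
        have := hs k
        rw [hs0, zero_mul] at this
        exact norm_eq_zero.mp this
      have : v = lam • uc := by
        have := sub_eq_zero.mp (hw ▸ hwzero)
        exact this
      rw [this]
      exact Submodule.smul_mem _ _ (Submodule.mem_span_singleton_self uc)
    · rw [Submodule.span_le, Set.singleton_subset_iff]
      rw [SetLike.mem_coe, hmem]
      exact hAuc
  refine ⟨hspan, ?_⟩
  rw [hspan]
  exact finrank_span_singleton hucne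
end

section
/- Let A, B ∈ ℝ^{N×N} with |A| ≤ B entrywise, assume B is irreducible, and let u ∈ ℝ^N be a nonzero vector with Au = u. If B|u| = |u|, then A and B are similar matrices; i.e., there exists an invertible matrix C ∈ ℂ^{N×N} such that A = C B C^{-1}. -/
open Filter

/-- **Domination of matrices (similarity).** Let `|A| ≤ B` entrywise, `B` irreducible,
`u ≠ 0` with `Au = u`, and `B|u| = |u|`. Then `A` and `B` are similar: there is an
invertible matrix `C ∈ ℂ^{N×N}` with `A = C B C⁻¹`. -/
theorem domination_similarity
    {N : ℕ} (A B : Matrix (Fin N) (Fin N) ℝ)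
    (hAB : ∀ j k, |A j k| ≤ B j k) (hB : MatIrred B)
    (u : Fin N → ℝ) (hu : u ≠ 0) (hAu : A.mulVec u = u)
    (hBu : B.mulVec (fun i => |u i|) = (fun i => |u i|)) :
    ∃ C : Matrix (Fin N) (Fin N) ℂ, IsUnit C ∧
      A.map Complex.ofReal = C * B.map Complex.ofReal * C⁻¹ := by
  classical
  have hBnn : ∀ j k, 0 ≤ B j k := fun j k => le_trans (abs_nonneg _) (hAB j k)
  -- zero propagation backwards along edges
  have hzero : ∀ j k, u j = 0 → B j k ≠ 0 → u k = 0 := by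
    intro j k hj hjk
    have h0 : ∑ l, B j l * |u l| = 0 := by
      have := congrFun hBu j
      simpa [Matrix.mulVec, dotProduct, hj] using this
    have hnn : ∀ l ∈ Finset.univ, (0:ℝ) ≤ B j l * |u l| :=
      fun l _ => mul_nonneg (hBnn j l) (abs_nonneg _)
    have := (Finset.sum_eq_zero_iff_of_nonneg hnn).1 h0 k (Finset.mem_univ k)
    rcases mul_eq_zero.1 this with h | h
    · exact absurd h hjk
    · exact abs_eq_zero.1 h
  -- u is nowhere zero
  have hpos : ∀ k, u k ≠ 0 := by
    by_contra h
    push_neg at h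
    obtain ⟨b, hb⟩ := h
    obtain ⟨a, ha⟩ := Function.ne_iff.1 hu
    have key : ∀ c : Fin N, Relation.TransGen (fun k j => B j k ≠ 0) a c → u c = 0 → u a = 0 := by
      intro c hc
      induction hc with
      | single h => exact fun hb => hzero _ _ hb h
      | tail _ h ih => exact fun hb => ih (hzero _ _ hb h)
    exact ha (key b (hB a b) hb)
  -- sign vector
  set s : Fin N → ℝ := fun j => if u j < 0 then -1 else 1 with hs
  have hsu : ∀ j, s j * u j = |u j| := by
    intro j
    by_cases h : u j < 0
    · simp [hs, h, abs_of_neg h]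
    · simp [hs, h, abs_of_nonneg (not_lt.1 h)]
  have hss : ∀ j, s j * s j = 1 := by
    intro j; by_cases h : u j < 0 <;> simp [hs, h]
  have habs : ∀ j, |s j| = 1 := by
    intro j; by_cases h : u j < 0 <;> simp [hs, h]
  have hsabs : ∀ j, s j * |u j| = u j := by
    intro j
    by_cases h : u j < 0
    · simp [hs, h, abs_of_neg h]
    · simp [hs, h, abs_of_nonneg (not_lt.1 h)]
  -- key entrywise identity
  have hkey : ∀ j k, A j k = s j * B j k * s k := by
    intro j k
    have sum1 : ∑ l, B j l * |u l| = |u j| := by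
      have := congrFun hBu j
      simpa [Matrix.mulVec, dotProduct] using this
    have sum2 : ∑ l, A j l * u l = u j := by
      have := congrFun hAu j
      simpa [Matrix.mulVec, dotProduct] using this
    have sum3 : ∑ l, (B j l - s j * A j l * s l) * |u l| = 0 := by
      have : ∑ l, s j * A j l * s l * |u l| = |u j| := by
        calc ∑ l, s j * A j l * s l * |u l| = s j * ∑ l, A j l * (s l * |u l|) := by
              rw [Finset.mul_sum]; congr 1; ext l; ring
          _ = s j * u j := by
              congr 1; rw [← sum2]; congr 1; ext l; rw [hsabs]
          _ = |u j| := hsu j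
      simp only [sub_mul, Finset.sum_sub_distrib, sum1, this, sub_self]
    have hnn : ∀ l ∈ Finset.univ, (0:ℝ) ≤ (B j l - s j * A j l * s l) * |u l| := by
      intro l _
      apply mul_nonneg _ (abs_nonneg _)
      have : s j * A j l * s l ≤ |s j * A j l * s l| := le_abs_self _
      have habs' : |s j * A j l * s l| = |A j l| := by
        rw [abs_mul, abs_mul, habs, habs, one_mul, mul_one]
      linarith [hAB j l, this, habs'.le]
    have := (Finset.sum_eq_zero_iff_of_nonneg hnn).1 sum3 k (Finset.mem_univ k)
    rcases mul_eq_zero.1 this with h | h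
    · have hBeq : B j k = s j * A j k * s k := by linarith [sub_eq_zero.1 h]
      have := congrArg (fun x => s j * x * s k) hBeq
      beta_reduce at this
      rw [this]
      have : s j * (s j * A j k * s k) * s k = (s j * s j) * A j k * (s k * s k) := by ring
      rw [this, hss, hss]; ring
    · exact absurd (abs_eq_zero.1 h) (hpos k)
  -- construct C
  refine ⟨Matrix.diagonal (fun j => (s j : ℂ)), ?_, ?_⟩ <;>
  · have hC2 : Matrix.diagonal (fun j => (s j : ℂ)) * Matrix.diagonal (fun j => (s j : ℂ)) = 1 := by
      rw [Matrix.diagonal_mul_diagonal]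
      convert Matrix.diagonal_one using 2
      funext j
      rw [← Complex.ofReal_mul, hss j, Complex.ofReal_one]
    first
    | exact ⟨⟨_, _, hC2, hC2⟩, rfl⟩
    | · rw [Matrix.inv_eq_right_inv hC2]
        ext j k
        simp only [Matrix.map_apply, Matrix.mul_diagonal, Matrix.diagonal_mul]
        rw [hkey j k]
        push_cast
        ring
end

section
/- Let N ≥ 1, let u ∈ ℝ^N be a nonzero vector, let F : ℝ^N_{++} → ℝ^N_{++} be continuously differentiable, assume F scales with exponent u and F connects all variables, and set G := clog ∘ F ∘ cexp. Then the following assertions are equivalent: (i) for each z ∈ ℝ^N the matrix |DG(z)| has spectral radius 1; (ii) for each z ∈ ℝ^N one has |DG(z)| |u| = |u|; (iii) for each z ∈ ℝ^N there exists a nonzero entrywise nonnegative vector v ∈ ℝ^N with |DG(z)| v = v; (iv) the monotonicity behavior of F is consistent with u. Moreover, if one (hence all) of these assertions holds, then every entry of u is nonzero. -/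
open Filter

/-- Componentwise natural logarithm `ℝ^N_{++} → ℝ^N`. -/
noncomputable def clog {N : ℕ} (x : Fin N → ℝ) : Fin N → ℝ := fun i => Real.log (x i)

/-- Componentwise exponential `ℝ^N → ℝ^N_{++}`. -/
noncomputable def cexp {N : ℕ} (z : Fin N → ℝ) : Fin N → ℝ := fun i => Real.exp (z i)

namespace SVSR

attribute [local instance] Matrix.linftyOpNormedAddCommGroup Matrix.linftyOpNormedRing
  Matrix.linftyOpNormedAlgebra

open Matrix Finset Filter

attribute [local instance] Matrix.linftyOpNormedAddCommGroup Matrix.linftyOpNormedRing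
  Matrix.linftyOpNormedAlgebra

variable {N : ℕ}

lemma entry_nonneg_mul {A B : Matrix (Fin N) (Fin N) ℝ} (hA : ∀ j k, 0 ≤ A j k)
    (hB : ∀ j k, 0 ≤ B j k) : ∀ j k, 0 ≤ (A * B) j k := by
  intro j k
  rw [Matrix.mul_apply]
  exact Finset.sum_nonneg fun m _ => mul_nonneg (hA j m) (hB m k)

lemma entry_nonneg_pow {A : Matrix (Fin N) (Fin N) ℝ} (hA : ∀ j k, 0 ≤ A j k) (n : ℕ) :
    ∀ j k, 0 ≤ (A ^ n) j k := by
  induction n with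
  | zero => intro j k; rw [pow_zero, Matrix.one_apply]; split <;> norm_num
  | succ n ih => rw [pow_succ]; exact entry_nonneg_mul ih hA

lemma onePlus_nonneg {A : Matrix (Fin N) (Fin N) ℝ} (hA : ∀ j k, 0 ≤ A j k) :
    ∀ j k, 0 ≤ (1 + A) j k := by
  intro j k
  have : (1 : Matrix (Fin N) (Fin N) ℝ) j k + A j k = (1 + A) j k := rfl
  rw [← this]
  have h1 : (0:ℝ) ≤ (1 : Matrix (Fin N) (Fin N) ℝ) j k := by
    rw [Matrix.one_apply]; split <;> norm_num
  exact add_nonneg h1 (hA j k)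

lemma pow_le_onePlus_pow {A : Matrix (Fin N) (Fin N) ℝ} (hA : ∀ j k, 0 ≤ A j k) (n : ℕ) :
    ∀ j k, (A ^ n) j k ≤ ((1 + A) ^ n) j k := by
  induction n with
  | zero => intro j k; simp
  | succ n ih =>
    intro j k
    rw [pow_succ, pow_succ, Matrix.mul_apply, Matrix.mul_apply]
    refine Finset.sum_le_sum fun m _ => ?_
    have h2 : A m k ≤ (1 + A) m k := by
      have h3 : (1 + A) m k = (1 : Matrix (Fin N) (Fin N) ℝ) m k + A m k := rfl
      rw [h3]
      have h1 : (0:ℝ) ≤ (1 : Matrix (Fin N) (Fin N) ℝ) m k := by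
        rw [Matrix.one_apply]; split <;> norm_num
      linarith
    exact mul_le_mul (ih j m) h2 (hA m k) ((entry_nonneg_pow (onePlus_nonneg hA) n) j m)

lemma onePlus_pow_mono {A : Matrix (Fin N) (Fin N) ℝ} (hA : ∀ j k, 0 ≤ A j k) {ℓ M : ℕ}
    (h : ℓ ≤ M) : ∀ j k, ((1 + A) ^ ℓ) j k ≤ ((1 + A) ^ M) j k := by
  induction M, h using Nat.le_induction with
  | base => intro j k; exact le_refl _
  | succ M hM ih =>
    intro j k
    refine (ih j k).trans ?_
    rw [pow_succ, mul_add, mul_one, Matrix.add_apply]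
    have := entry_nonneg_mul (entry_nonneg_pow (onePlus_nonneg hA) M) hA j k
    linarith

lemma path_pow_pos {A : Matrix (Fin N) (Fin N) ℝ} (hA : ∀ j k, 0 ≤ A j k) {a b : Fin N}
    (h : Relation.TransGen (fun k j => A j k ≠ 0) a b) : ∃ ℓ, 0 < (A ^ ℓ) b a := by
  induction h with
  | single h => exact ⟨1, by rw [pow_one]; exact lt_of_le_of_ne (hA _ _) (Ne.symm h)⟩
  | tail _ h ih =>
    obtain ⟨ℓ, hℓ⟩ := ih
    refine ⟨ℓ + 1, ?_⟩
    rw [pow_succ', Matrix.mul_apply]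
    refine Finset.sum_pos' (fun m _ => mul_nonneg (hA _ _) (entry_nonneg_pow hA ℓ _ _)) ?_
    exact ⟨_, Finset.mem_univ _, mul_pos (lt_of_le_of_ne (hA _ _) (Ne.symm h)) hℓ⟩

lemma exists_pos_comm {A : Matrix (Fin N) (Fin N) ℝ} (hA : ∀ j k, 0 ≤ A j k)
    (hirr : ∀ a b : Fin N, Relation.TransGen (fun k j => A j k ≠ 0) a b) :
    ∃ P : Matrix (Fin N) (Fin N) ℝ, (∀ j k, 0 < P j k) ∧ A * P = P * A := by
  have hex : ∀ p : Fin N × Fin N, ∃ ℓ, 0 < (A ^ ℓ) p.2 p.1 := fun p => path_pow_pos hA (hirr p.1 p.2)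
  choose f hf using hex
  set M := Finset.univ.sup f with hM
  refine ⟨(1 + A) ^ M, fun j k => ?_, (((Commute.one_right A).add_right (Commute.refl A)).pow_right M)⟩
  have h1 : 0 < (A ^ f (k, j)) j k := hf (k, j)
  have h2 := pow_le_onePlus_pow hA (f (k, j)) j k
  have h3 := onePlus_pow_mono hA (Finset.le_sup (f := f) (Finset.mem_univ (k, j))) j k
  linarith

lemma prop_pos {A : Matrix (Fin N) (Fin N) ℝ} (hA : ∀ j k, 0 ≤ A j k) {v : Fin N → ℝ}
    (heq : A.mulVec v = v) (hv0 : ∀ i, 0 ≤ v i) {a b : Fin N}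
    (hpath : Relation.TransGen (fun k j => A j k ≠ 0) a b) (ha : 0 < v a) : 0 < v b := by
  induction hpath with
  | single h =>
    rename_i b'
    have h1 : v b' = ∑ m, A b' m * v m := (congrFun heq b').symm
    rw [h1]
    refine Finset.sum_pos' (fun m _ => mul_nonneg (hA _ _) (hv0 m)) ?_
    exact ⟨a, Finset.mem_univ a, mul_pos (lt_of_le_of_ne (hA _ _) (Ne.symm h)) ha⟩
  | tail _ h ih =>
    rename_i b' c _
    have h1 : v c = ∑ m, A c m * v m := (congrFun heq c).symm
    rw [h1]
    refine Finset.sum_pos' (fun m _ => mul_nonneg (hA _ _) (hv0 m)) ?_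
    exact ⟨b', Finset.mem_univ b', mul_pos (lt_of_le_of_ne (hA _ _) (Ne.symm h)) ih⟩

lemma mulVec_cast (A : Matrix (Fin N) (Fin N) ℝ) (v : Fin N → ℝ) :
    (A.map Complex.ofReal).mulVec (fun i => (v i : ℂ)) = fun i => ((A.mulVec v i : ℝ) : ℂ) := by
  funext i
  simp only [Matrix.mulVec, dotProduct, Matrix.map_apply]
  push_cast
  rfl

lemma spec_eigenvector {μ : ℂ} {B : Matrix (Fin N) (Fin N) ℂ} (hμ : μ ∈ spectrum ℂ B) :
    ∃ x : Fin N → ℂ, x ≠ 0 ∧ B.mulVec x = μ • x := by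
  rw [spectrum.mem_iff] at hμ
  rw [Matrix.isUnit_iff_isUnit_det, isUnit_iff_ne_zero, not_not,
    ← Matrix.exists_mulVec_eq_zero_iff] at hμ
  obtain ⟨x, hx, hx0⟩ := hμ
  refine ⟨x, hx, ?_⟩
  have h0 : (algebraMap ℂ (Matrix (Fin N) (Fin N) ℂ) μ).mulVec x - B.mulVec x = 0 := by
    rw [← Matrix.sub_mulVec]; exact hx0
  have h2 : (algebraMap ℂ (Matrix (Fin N) (Fin N) ℂ) μ).mulVec x = μ • x := by
    funext i
    simp [Matrix.algebraMap_eq_diagonal, Matrix.mulVec_diagonal]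
  rw [h2] at h0
  funext i
  have h3 := congrFun h0 i
  simp only [Pi.sub_apply, Pi.zero_apply, sub_eq_zero] at h3
  exact h3.symm

lemma spec_abs_le_of_subinv {A : Matrix (Fin N) (Fin N) ℝ} (hA : ∀ j k, 0 ≤ A j k)
    {v : Fin N → ℝ} (hv : ∀ i, 0 < v i) {r : ℝ} (hr : ∀ j, A.mulVec v j ≤ r * v j)
    {μ : ℂ} (hμ : μ ∈ spectrum ℂ (A.map Complex.ofReal)) : ‖μ‖ ≤ r := by
  obtain ⟨x, hx, hx0⟩ := spec_eigenvector hμ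
  obtain ⟨j, -, hj⟩ := Finset.exists_max_image Finset.univ (fun k => ‖x k‖ / v k)
    (by
      obtain ⟨k, hk⟩ := Function.ne_iff.mp hx
      exact ⟨k, Finset.mem_univ k⟩)
  set c := ‖x j‖ / v j with hc
  have hbound : ∀ k, ‖x k‖ ≤ c * v k := fun k => by
    have h := hj k (Finset.mem_univ k)
    rwa [div_le_iff₀ (hv k)] at h
  have hcpos : 0 < c := by
    obtain ⟨k, hk⟩ := Function.ne_iff.mp hx
    have h1 : 0 < ‖x k‖ / v k :=
      div_pos (by simpa using hk) (hv k)
    exact lt_of_lt_of_le h1 (hj k (Finset.mem_univ k))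
  have hxj : ‖x j‖ = c * v j := by
    rw [hc, div_mul_cancel₀ _ (ne_of_gt (hv j))]
  have key : ‖μ‖ * ‖x j‖ ≤ c * (A.mulVec v j) := by
    have h1 : μ * x j = ∑ k, (A j k : ℂ) * x k := by
      have h2 := congrFun hx0 j
      simp only [Matrix.mulVec, dotProduct, Matrix.map_apply, Pi.smul_apply,
        smul_eq_mul] at h2
      exact h2.symm
    calc ‖μ‖ * ‖x j‖ = ‖μ * x j‖ := (norm_mul _ _).symm
    _ = ‖∑ k, (A j k : ℂ) * x k‖ := by rw [h1]
    _ ≤ ∑ k, ‖(A j k : ℂ) * x k‖ := by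
        simpa using norm_sum_le Finset.univ (fun k => (A j k : ℂ) * x k)
    _ = ∑ k, A j k * ‖x k‖ := by
        refine Finset.sum_congr rfl fun k _ => ?_
        rw [norm_mul, Complex.norm_real, Real.norm_eq_abs, abs_of_nonneg (hA j k)]
    _ ≤ ∑ k, A j k * (c * v k) :=
        Finset.sum_le_sum fun k _ => mul_le_mul_of_nonneg_left (hbound k) (hA j k)
    _ = c * (A.mulVec v j) := by
        rw [Matrix.mulVec, dotProduct, Finset.mul_sum]
        exact Finset.sum_congr rfl fun k _ => by ring
  have h5 : ‖μ‖ * (c * v j) ≤ c * (r * v j) :=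
    le_trans (by rw [← hxj]; exact key) (mul_le_mul_of_nonneg_left (hr j) (le_of_lt hcpos))
  have hvj := hv j
  nlinarith [mul_pos hcpos hvj]

lemma one_mem_spec {A : Matrix (Fin N) (Fin N) ℝ} {v : Fin N → ℝ} (hv : v ≠ 0)
    (heq : A.mulVec v = v) : (1 : ℂ) ∈ spectrum ℂ (A.map Complex.ofReal) := by
  rw [spectrum.mem_iff, Matrix.isUnit_iff_isUnit_det, isUnit_iff_ne_zero, not_not,
    ← Matrix.exists_mulVec_eq_zero_iff]
  refine ⟨fun i => (v i : ℂ), ?_, ?_⟩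
  · intro h
    apply hv
    funext i
    have h1 := congrFun h i
    simpa using h1
  · have h2 : (algebraMap ℂ (Matrix (Fin N) (Fin N) ℂ) 1).mulVec (fun i => (v i : ℂ))
        = fun i => (v i : ℂ) := by
      funext i
      simp [Matrix.algebraMap_eq_diagonal, Matrix.mulVec_diagonal]
    rw [Matrix.sub_mulVec, h2, mulVec_cast, heq]
    funext i; simp

lemma map_ofReal_pow (A : Matrix (Fin N) (Fin N) ℝ) (n : ℕ) :
    (A.map Complex.ofReal) ^ n = (A ^ n).map Complex.ofReal := by
  have h : ∀ B : Matrix (Fin N) (Fin N) ℝ, B.map Complex.ofReal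
      = Complex.ofRealHom.mapMatrix B := fun B => rfl
  rw [h, h, ← map_pow]

lemma exists_spec_gt_one {A : Matrix (Fin N) (Fin N) ℝ} (hN : 1 ≤ N) (hA : ∀ j k, 0 ≤ A j k)
    {w : Fin N → ℝ} (hw : ∀ i, 0 < w i) {δ : ℝ} (hδ : 0 < δ)
    (h : ∀ j, (1 + δ) * w j ≤ A.mulVec w j) :
    ∃ μ ∈ spectrum ℂ (A.map Complex.ofReal), 1 < ‖μ‖ := by
  haveI : CompleteSpace (Matrix (Fin N) (Fin N) ℂ) := FiniteDimensional.complete ℂ _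
  have hpow : ∀ n : ℕ, ∀ j, (1 + δ) ^ n * w j ≤ (A ^ n).mulVec w j := by
    intro n
    induction n with
    | zero => intro j; simp [Matrix.one_mulVec]
    | succ n ih =>
      intro j
      have hps : (A ^ (n + 1)).mulVec w = A.mulVec ((A ^ n).mulVec w) := by
        rw [pow_succ' A n, Matrix.mulVec_mulVec]
      rw [hps]
      calc (1 + δ) ^ (n + 1) * w j = (1 + δ) ^ n * ((1 + δ) * w j) := by ring
      _ ≤ (1 + δ) ^ n * A.mulVec w j :=
          mul_le_mul_of_nonneg_left (h j) (by positivity)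
      _ = ∑ k, A j k * ((1 + δ) ^ n * w k) := by
          rw [Matrix.mulVec, dotProduct, Finset.mul_sum]
          exact Finset.sum_congr rfl fun k _ => by ring
      _ ≤ ∑ k, A j k * ((A ^ n).mulVec w k) :=
          Finset.sum_le_sum fun k _ => mul_le_mul_of_nonneg_left (ih k) (hA j k)
      _ = A.mulVec ((A ^ n).mulVec w) j := rfl
  set j₀ : Fin N := ⟨0, hN⟩
  obtain ⟨wmax, hwmaxmem, hwmax⟩ : ∃ m : ℝ, (∃ i, w i = m) ∧ ∀ k, w k ≤ m := by
    obtain ⟨i, -, hi⟩ := Finset.exists_max_image Finset.univ w ⟨j₀, Finset.mem_univ _⟩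
    exact ⟨w i, ⟨i, rfl⟩, fun k => hi k (Finset.mem_univ k)⟩
  have hwmaxpos : 0 < wmax := by obtain ⟨i, hi⟩ := hwmaxmem; rw [← hi]; exact hw i
  set c : ℝ := w j₀ / wmax with hc
  have hcpos : 0 < c := div_pos (hw j₀) hwmaxpos
  have hrow : ∀ n : ℕ, c * (1 + δ) ^ n ≤ ∑ k, (A ^ n) j₀ k := by
    intro n
    have h1 : (1 + δ) ^ n * w j₀ ≤ ∑ k, (A ^ n) j₀ k * w k := hpow n j₀
    have h2 : ∑ k, (A ^ n) j₀ k * w k ≤ (∑ k, (A ^ n) j₀ k) * wmax := by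
      rw [Finset.sum_mul]
      exact Finset.sum_le_sum fun k _ =>
        mul_le_mul_of_nonneg_left (hwmax k) (entry_nonneg_pow hA n j₀ k)
    rw [hc, div_mul_eq_mul_div, div_le_iff₀ hwmaxpos]
    calc w j₀ * (1 + δ) ^ n = (1 + δ) ^ n * w j₀ := by ring
    _ ≤ (∑ k, (A ^ n) j₀ k) * wmax := h1.trans h2
  have hnorm : ∀ n : ℕ, ∑ k, (A ^ n) j₀ k ≤ ‖(A.map Complex.ofReal) ^ n‖ := by
    intro n
    rw [map_ofReal_pow, Matrix.linfty_opNorm_def]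
    have h1 : (∑ k, ‖((A ^ n).map Complex.ofReal) j₀ k‖₊)
        ≤ Finset.univ.sup fun i => ∑ k, ‖((A ^ n).map Complex.ofReal) i k‖₊ :=
      Finset.le_sup (f := fun i => ∑ k, ‖((A ^ n).map Complex.ofReal) i k‖₊)
        (Finset.mem_univ j₀)
    have h2 : ((∑ k, ‖((A ^ n).map Complex.ofReal) j₀ k‖₊ : NNReal) : ℝ)
        = ∑ k, (A ^ n) j₀ k := by
      push_cast
      refine Finset.sum_congr rfl fun k _ => ?_
      simp only [Matrix.map_apply, Complex.nnnorm_real, coe_nnnorm, Complex.norm_real, Real.norm_eq_abs]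
      exact abs_of_nonneg (entry_nonneg_pow hA n j₀ k)
    rw [← h2]
    exact_mod_cast h1
  by_contra hcon
  push_neg at hcon
  have hρ : spectralRadius ℂ (A.map Complex.ofReal) ≤ 1 := by
    rw [spectralRadius]
    refine iSup₂_le fun μ hμ => ?_
    have h1 : ‖μ‖ ≤ 1 := hcon μ hμ
    have h2 : ‖μ‖₊ ≤ 1 := by
      rw [← NNReal.coe_le_coe, coe_nnnorm, NNReal.coe_one]
      exact h1
    exact_mod_cast h2
  set t : ℝ := 1 + δ / 2 with ht
  have ht1 : 1 < t := by rw [ht]; linarith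
  have ht2 : t < 1 + δ := by rw [ht]; linarith
  have htpos : 0 < t := by linarith
  have hev : ∀ᶠ n : ℕ in atTop, t ^ n ≤ ‖(A.map Complex.ofReal) ^ n‖ := by
    have htend : Tendsto (fun n : ℕ => (t / (1 + δ)) ^ n) atTop (nhds 0) :=
      tendsto_pow_atTop_nhds_zero_of_lt_one (by positivity)
        (by rw [div_lt_one (by linarith)]; exact ht2)
    filter_upwards [htend.eventually (gt_mem_nhds hcpos)] with n hn
    have h1 : t ^ n ≤ c * (1 + δ) ^ n := by
      have h2 : (t / (1 + δ)) ^ n * (1 + δ) ^ n = t ^ n := by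
        rw [← mul_pow]; congr 1; field_simp
      rw [← h2]
      have h3 : (0:ℝ) < (1 + δ) ^ n := by positivity
      nlinarith [le_of_lt hn]
    exact h1.trans ((hrow n).trans (hnorm n))
  have hfin : (Real.toNNReal t : ENNReal) ≤ spectralRadius ℂ (A.map Complex.ofReal) := by
    refine ge_of_tendsto
      (spectrum.pow_nnnorm_pow_one_div_tendsto_nhds_spectralRadius (A.map Complex.ofReal)) ?_
    filter_upwards [hev, eventually_ge_atTop 1] with n h1 hn1
    have hn0 : (n : ℝ) ≠ 0 := by positivity
    have h2 : (Real.toNNReal t) ^ n ≤ ‖(A.map Complex.ofReal) ^ n‖₊ := by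
      rw [← norm_toNNReal, ← Real.toNNReal_pow (le_of_lt htpos)]
      exact Real.toNNReal_mono h1
    have h3 : (((Real.toNNReal t ^ n : NNReal) : ENNReal)) ^ (1 / (n:ℝ))
        = (Real.toNNReal t : ENNReal) := by
      rw [ENNReal.coe_pow, ← ENNReal.rpow_natCast, ← ENNReal.rpow_mul,
        mul_one_div_cancel hn0, ENNReal.rpow_one]
    rw [← h3]
    exact ENNReal.rpow_le_rpow (by exact_mod_cast h2) (by positivity)
  have hgt : (1 : ENNReal) < (Real.toNNReal t : ENNReal) := by
    rw [← ENNReal.coe_one, ENNReal.coe_lt_coe, ← Real.toNNReal_one]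
    exact (Real.toNNReal_lt_toNNReal_iff htpos).mpr ht1
  exact absurd (hfin.trans hρ) (not_le.mpr hgt)


open ContinuousLinearMap
open ContinuousLinearMap

variable {N : ℕ}

lemma isOpen_posOrth : IsOpen (PosOrth N) := by
  have h : PosOrth N = ⋂ i, (fun x : Fin N → ℝ => x i) ⁻¹' Set.Ioi 0 := by
    ext x
    simp [PosOrth, Set.mem_iInter, Set.mem_preimage, Set.mem_Ioi]
  rw [h]
  exact isOpen_iInter_of_finite fun i => (isOpen_Ioi).preimage (continuous_apply i)

lemma cexp_mem (z : Fin N → ℝ) : cexp z ∈ PosOrth N := fun i => Real.exp_pos _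

lemma cexp_clog {x : Fin N → ℝ} (hx : x ∈ PosOrth N) : cexp (clog x) = x := by
  funext i
  exact Real.exp_log (hx i)

lemma hasFDerivAt_G {F : (Fin N → ℝ) → (Fin N → ℝ)}
    (hmap : ∀ x ∈ PosOrth N, F x ∈ PosOrth N) (hC1 : ContDiffOn ℝ 1 F (PosOrth N))
    (z : Fin N → ℝ) :
    HasFDerivAt (clog ∘ F ∘ cexp)
      ((ContinuousLinearMap.pi fun j : Fin N => (F (cexp z) j)⁻¹ • (ContinuousLinearMap.proj j : (Fin N → ℝ) →L[ℝ] ℝ)).comp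
        ((fderiv ℝ F (cexp z)).comp
          (ContinuousLinearMap.pi fun i : Fin N => Real.exp (z i) • (ContinuousLinearMap.proj i : (Fin N → ℝ) →L[ℝ] ℝ)))) z := by
  have hx : cexp z ∈ PosOrth N := cexp_mem z
  have hdF : HasFDerivAt F (fderiv ℝ F (cexp z)) (cexp z) :=
    ((hC1.differentiableOn one_ne_zero).differentiableAt (isOpen_posOrth.mem_nhds hx)).hasFDerivAt
  have hdexp : HasFDerivAt (cexp : (Fin N → ℝ) → Fin N → ℝ)
      (ContinuousLinearMap.pi fun i : Fin N => Real.exp (z i) • (ContinuousLinearMap.proj i : (Fin N → ℝ) →L[ℝ] ℝ)) z := by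
    refine (hasFDerivAt_pi (𝕜 := ℝ)
      (φ' := fun i : Fin N => Real.exp (z i) • (ContinuousLinearMap.proj i : (Fin N → ℝ) →L[ℝ] ℝ))
      (φ := fun i (z : Fin N → ℝ) => Real.exp (z i)) (x := z)).2 fun i => ?_
    exact (Real.hasDerivAt_exp (z i)).comp_hasFDerivAt z (hasFDerivAt_apply (𝕜 := ℝ) i z)
  have hdlog : HasFDerivAt (clog : (Fin N → ℝ) → Fin N → ℝ)
      (ContinuousLinearMap.pi fun j : Fin N => (F (cexp z) j)⁻¹ • (ContinuousLinearMap.proj j : (Fin N → ℝ) →L[ℝ] ℝ))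
      (F (cexp z)) := by
    refine (hasFDerivAt_pi (𝕜 := ℝ)
      (φ' := fun j : Fin N => (F (cexp z) j)⁻¹ • (ContinuousLinearMap.proj j : (Fin N → ℝ) →L[ℝ] ℝ))
      (φ := fun j (y : Fin N → ℝ) => Real.log (y j)) (x := F (cexp z))).2 fun j => ?_
    exact (Real.hasDerivAt_log (ne_of_gt (hmap _ hx j))).comp_hasFDerivAt (F (cexp z))
      (hasFDerivAt_apply (𝕜 := ℝ) j (F (cexp z)))
  exact hdlog.comp z (hdF.comp z hdexp)

lemma jacG_formula {F : (Fin N → ℝ) → (Fin N → ℝ)}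
    (hmap : ∀ x ∈ PosOrth N, F x ∈ PosOrth N) (hC1 : ContDiffOn ℝ 1 F (PosOrth N))
    (z : Fin N → ℝ) (j k : Fin N) :
    Jac (clog ∘ F ∘ cexp) z j k
      = (Real.exp (z k) / F (cexp z) j) * Jac F (cexp z) j k := by
  have h := (hasFDerivAt_G hmap hC1 z).fderiv
  show fderiv ℝ (clog ∘ F ∘ cexp) z (Pi.single k 1) j = _
  rw [h]
  simp only [ContinuousLinearMap.comp_apply, ContinuousLinearMap.pi_apply,
    ContinuousLinearMap.smul_apply, ContinuousLinearMap.proj_apply]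
  have h1 : ((ContinuousLinearMap.pi fun i : Fin N =>
        Real.exp (z i) • (ContinuousLinearMap.proj i : (Fin N → ℝ) →L[ℝ] ℝ))
        (Pi.single k 1 : Fin N → ℝ))
      = Real.exp (z k) • (Pi.single k 1 : Fin N → ℝ) := by
    funext i
    rw [ContinuousLinearMap.pi_apply, ContinuousLinearMap.smul_apply,
      ContinuousLinearMap.proj_apply]
    by_cases hik : i = k
    · subst hik; simp
    · simp [Pi.single_eq_of_ne hik]
  rw [h1, _root_.map_smul]
  show (F (cexp z) j)⁻¹ * (Real.exp (z k) • fderiv ℝ F (cexp z) (Pi.single k 1)) j = _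
  show (F (cexp z) j)⁻¹ * (Real.exp (z k) * fderiv ℝ F (cexp z) (Pi.single k 1) j) = _
  show _ = Real.exp (z k) / F (cexp z) j * fderiv ℝ F (cexp z) (Pi.single k 1) j
  ring

lemma G_line {u : Fin N → ℝ} {F : (Fin N → ℝ) → (Fin N → ℝ)}
    (hmap : ∀ x ∈ PosOrth N, F x ∈ PosOrth N)
    (hscale : ∀ x ∈ PosOrth N, ∀ c : ℝ, 0 < c → F (pscale c u x) = pscale c u (F x))
    (z : Fin N → ℝ) (t : ℝ) :
    (clog ∘ F ∘ cexp) (z + t • u) = (clog ∘ F ∘ cexp) z + t • u := by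
  have hx : cexp z ∈ PosOrth N := cexp_mem z
  have hc : cexp (z + t • u) = pscale (Real.exp t) u (cexp z) := by
    funext i
    show Real.exp ((z + t • u) i) = Real.exp t ^ u i * Real.exp (z i)
    rw [Real.rpow_def_of_pos (Real.exp_pos t), Real.log_exp, ← Real.exp_add]
    congr 1
    show z i + t * u i = t * u i + z i
    ring
  funext j
  show Real.log (F (cexp (z + t • u)) j) = Real.log (F (cexp z) j) + t * u j
  rw [hc, hscale _ hx _ (Real.exp_pos t)]
  show Real.log (Real.exp t ^ u j * F (cexp z) j) = _
  rw [Real.log_mul (ne_of_gt (Real.rpow_pos_of_pos (Real.exp_pos t) _))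
    (ne_of_gt (hmap _ hx j)), Real.log_rpow (Real.exp_pos t), Real.log_exp]
  ring

lemma jacG_mulVec {u : Fin N → ℝ} {F : (Fin N → ℝ) → (Fin N → ℝ)}
    (hmap : ∀ x ∈ PosOrth N, F x ∈ PosOrth N) (hC1 : ContDiffOn ℝ 1 F (PosOrth N))
    (hscale : ∀ x ∈ PosOrth N, ∀ c : ℝ, 0 < c → F (pscale c u x) = pscale c u (F x))
    (z : Fin N → ℝ) :
    (Jac (clog ∘ F ∘ cexp) z).mulVec u = u := by
  set G := clog ∘ F ∘ cexp with hGdef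
  set L := (ContinuousLinearMap.pi fun j : Fin N =>
      (F (cexp z) j)⁻¹ • (ContinuousLinearMap.proj j : (Fin N → ℝ) →L[ℝ] ℝ)).comp
      ((fderiv ℝ F (cexp z)).comp
        (ContinuousLinearMap.pi fun i : Fin N =>
          Real.exp (z i) • (ContinuousLinearMap.proj i : (Fin N → ℝ) →L[ℝ] ℝ))) with hL
  have hGz : HasFDerivAt G L z := hasFDerivAt_G hmap hC1 z
  -- L u = u
  have hline : HasDerivAt (fun t : ℝ => G (z + t • u)) (L u) 0 := by
    have hℓ : HasDerivAt (fun t : ℝ => z + t • u) u 0 := by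
      simpa using ((hasDerivAt_id (0:ℝ)).smul_const u).const_add z
    have hGz' : HasFDerivAt G L (z + (0:ℝ) • u) := by simpa using hGz
    exact HasFDerivAt.comp_hasDerivAt (l := G) (f := fun t : ℝ => z + t • u) 0 hGz' hℓ
  have hline2 : HasDerivAt (fun t : ℝ => G (z + t • u)) u 0 := by
    have heq : (fun t : ℝ => G (z + t • u)) = fun t : ℝ => G z + t • u := by
      funext t
      exact G_line hmap hscale z t
    rw [heq]
    simpa using ((hasDerivAt_id (0:ℝ)).smul_const u).const_add (G z)
  have hLu : L u = u := hline.unique hline2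
  -- conclude
  funext j
  have hu_sum : u = ∑ k, u k • (Pi.single k 1 : Fin N → ℝ) := by
    have h1 : ∀ k, u k • (Pi.single k 1 : Fin N → ℝ) = Pi.single k (u k) := by
      intro k
      funext i
      by_cases hik : i = k
      · subst hik; simp
      · simp [Pi.single_eq_of_ne hik]
    simp_rw [h1]
    exact (Finset.univ_sum_single u).symm
  have h2 : L u j = ∑ k, u k * L (Pi.single k 1) j := by
    conv_lhs => rw [hu_sum]
    rw [map_sum]
    simp only [_root_.map_smul]
    rw [Finset.sum_apply]
    simp [smul_eq_mul]
  have h3 : ∀ k, Jac G z j k = L (Pi.single k 1) j := by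
    intro k
    show fderiv ℝ G z (Pi.single k 1) j = _
    rw [hGz.fderiv]
  show ∑ k, Jac G z j k * u k = u j
  calc ∑ k, Jac G z j k * u k = ∑ k, u k * L (Pi.single k 1) j := by
        refine Finset.sum_congr rfl fun k _ => ?_
        rw [h3 k]; ring
  _ = L u j := h2.symm
  _ = u j := by rw [hLu]

lemma posMulVec {N : ℕ} {P : Matrix (Fin N) (Fin N) ℝ} (hP : ∀ j k, 0 < P j k)
    {v : Fin N → ℝ} (hv : ∀ i, 0 ≤ v i) (hv0 : v ≠ 0) : ∀ j, 0 < P.mulVec v j := by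
  intro j
  show 0 < ∑ k, P j k * v k
  obtain ⟨k, hk⟩ := Function.ne_iff.mp hv0
  refine Finset.sum_pos' (fun m _ => mul_nonneg (le_of_lt (hP j m)) (hv m)) ?_
  exact ⟨k, Finset.mem_univ k, mul_pos (hP j k) (lt_of_le_of_ne (hv k) (Ne.symm hk))⟩

end SVSR

/-- **Monotonicity vs. spectral radius.** Let `u ≠ 0`, let `F : ℝ^N_{++} → ℝ^N_{++}` be
continuously differentiable, scale with exponent `u` and connect all variables, and let
`G := clog ∘ F ∘ cexp`. Then the following are equivalent:
(i) for each `z`, `|DG(z)|` has spectral radius `1`;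
(ii) for each `z`, `|DG(z)| |u| = |u|`;
(iii) for each `z`, there is a nonzero nonnegative `v` with `|DG(z)| v = v`;
(iv) the monotonicity behavior of `F` is consistent with `u`.
Moreover, if one (hence all) of these holds, every entry of `u` is nonzero. -/
theorem signs_vs_spectral_radius
    {N : ℕ} (hN : 1 ≤ N) (u : Fin N → ℝ) (hu : u ≠ 0)
    (F : (Fin N → ℝ) → (Fin N → ℝ))
    (hmap : ∀ x ∈ PosOrth N, F x ∈ PosOrth N)
    (hC1 : ContDiffOn ℝ 1 F (PosOrth N))
    (hscale : ∀ x ∈ PosOrth N, ∀ c : ℝ, 0 < c → F (pscale c u x) = pscale c u (F x))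
    (hconn : ∀ x ∈ PosOrth N, MatIrred (Matrix.of fun j k => |Jac F x j k|))
    (G : (Fin N → ℝ) → (Fin N → ℝ)) (hG : G = clog ∘ F ∘ cexp) :
    ([∀ z : Fin N → ℝ, specRad (Matrix.of fun j k => |Jac G z j k|) = 1,
      ∀ z : Fin N → ℝ,
        (Matrix.of fun j k => |Jac G z j k|).mulVec (fun i => |u i|) = (fun i => |u i|),
      ∀ z : Fin N → ℝ, ∃ v : Fin N → ℝ, v ≠ 0 ∧ (∀ i, 0 ≤ v i) ∧
        (Matrix.of fun j k => |Jac G z j k|).mulVec v = v,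
      MonoConsistent F u].TFAE) ∧
    (MonoConsistent F u → ∀ j, u j ≠ 0) := by

  subst hG
  set G := clog ∘ F ∘ cexp with hGdef
  -- basic facts
  have hmul : ∀ z : Fin N → ℝ, (Jac G z).mulVec u = u := fun z =>
    SVSR.jacG_mulVec hmap hC1 hscale z
  have hform : ∀ (z : Fin N → ℝ) (j k : Fin N),
      Jac G z j k = Real.exp (z k) / F (cexp z) j * Jac F (cexp z) j k := fun z =>
    SVSR.jacG_formula hmap hC1 z
  have hppos : ∀ (z : Fin N → ℝ) (j k : Fin N), 0 < Real.exp (z k) / F (cexp z) j :=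
    fun z j k => div_pos (Real.exp_pos _) (hmap _ (SVSR.cexp_mem z) j)
  have hAnn : ∀ (z : Fin N → ℝ) (j k : Fin N),
      0 ≤ (Matrix.of fun j k => |Jac G z j k|) j k := fun z j k => abs_nonneg _
  have hAirr : ∀ z : Fin N → ℝ, MatIrred (Matrix.of fun j k => |Jac G z j k|) := by
    intro z a b
    refine Relation.TransGen.mono ?_ a b (hconn (cexp z) (SVSR.cexp_mem z) a b)
    intro k j hkj
    show |Jac G z j k| ≠ 0
    rw [abs_ne_zero, hform z j k]
    have hkj' : Jac F (cexp z) j k ≠ 0 := by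
      simpa [abs_ne_zero] using hkj
    exact mul_ne_zero (ne_of_gt (hppos z j k)) hkj'
  have hmulj : ∀ (z : Fin N → ℝ) (j : Fin N), ∑ k, Jac G z j k * u k = u j := by
    intro z j
    have h := congrFun (hmul z) j
    simpa [Matrix.mulVec, dotProduct] using h
  have hsub : ∀ (z : Fin N → ℝ) (j : Fin N),
      |u j| ≤ ∑ k, |Jac G z j k| * |u k| := by
    intro z j
    calc |u j| = |∑ k, Jac G z j k * u k| := by rw [hmulj z j]
    _ ≤ ∑ k, |Jac G z j k * u k| := Finset.abs_sum_le_sum_abs _ _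
    _ = ∑ k, |Jac G z j k| * |u k| := by
        exact Finset.sum_congr rfl fun k _ => abs_mul _ _
  have hmv : ∀ (z : Fin N → ℝ) (v : Fin N → ℝ) (j : Fin N),
      (Matrix.of fun j k => |Jac G z j k|).mulVec v j = ∑ k, |Jac G z j k| * v k :=
    fun z v j => rfl
  -- (iv) → (ii)
  have h42 : MonoConsistent F u →
      ∀ z : Fin N → ℝ, (Matrix.of fun j k => |Jac G z j k|).mulVec (fun i => |u i|)
        = fun i => |u i| := by
    rintro ⟨ζ, hp, hm, hsign⟩ z
    set s : Fin N → ℝ := fun j => if ζ j then 1 else -1 with hs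
    have hsu : ∀ j, |u j| = s j * u j := by
      intro j
      by_cases h : ζ j = true
      · simp [hs, h, abs_of_nonneg (hp j h)]
      · have h' : ζ j = false := by simpa using h
        simp [hs, h', abs_of_nonpos (hm j h')]
    have hss : ∀ j, s j * s j = 1 := by
      intro j; by_cases h : ζ j = true
      · simp [hs, h]
      · have h' : ζ j = false := by simpa using h
        simp [hs, h']
    have hsJ : ∀ j k, |Jac G z j k| = s j * s k * Jac G z j k := by
      intro j k
      have hF := hsign (cexp z) (SVSR.cexp_mem z) j k
      by_cases h : ζ j = ζ k
      · have h2 : 0 ≤ Jac G z j k := by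
          rw [hform z j k]
          exact mul_nonneg (le_of_lt (hppos z j k)) (hF.1 h)
        have h3 : s j = s k := by rw [hs]; simp [h]
        rw [abs_of_nonneg h2, h3, hss k, one_mul]
      · have h2 : Jac G z j k ≤ 0 := by
          rw [hform z j k]
          exact mul_nonpos_of_nonneg_of_nonpos (le_of_lt (hppos z j k)) (hF.2 h)
        have h3 : s j * s k = -1 := by
          by_cases hj : ζ j = true
          · have hk : ζ k = false := by
              cases hkk : ζ k
              · rfl
              · exact absurd (hj.trans hkk.symm) h
            norm_num [hs, hj, hk]
          · have hj' : ζ j = false := by simpa using hj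
            have hk : ζ k = true := by
              cases hkk : ζ k
              · exact absurd (hj'.trans hkk.symm) h
              · rfl
            norm_num [hs, hj', hk]
        rw [abs_of_nonpos h2, h3]; ring
    funext j
    rw [hmv]
    have hstep : ∀ k' : Fin N, |Jac G z j k'| * |u k'| = s j * (Jac G z j k' * u k') := by
      intro k'
      rw [hsJ j k', hsu k']
      linear_combination (s j * Jac G z j k' * u k') * hss k'
    rw [Finset.sum_congr rfl fun k' _ => hstep k', ← Finset.mul_sum, hmulj z j]
    exact (hsu j).symm
  -- (ii) → (iii)
  have h23 : (∀ z : Fin N → ℝ, (Matrix.of fun j k => |Jac G z j k|).mulVec (fun i => |u i|)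
        = fun i => |u i|) →
      ∀ z : Fin N → ℝ, ∃ v : Fin N → ℝ, v ≠ 0 ∧ (∀ i, 0 ≤ v i) ∧
        (Matrix.of fun j k => |Jac G z j k|).mulVec v = v := by
    intro h2 z
    refine ⟨fun i => |u i|, ?_, fun i => abs_nonneg _, h2 z⟩
    intro h
    apply hu
    funext i
    have := congrFun h i
    simpa [abs_eq_zero] using this
  -- (iii) → (i)
  have h31 : (∀ z : Fin N → ℝ, ∃ v : Fin N → ℝ, v ≠ 0 ∧ (∀ i, 0 ≤ v i) ∧
        (Matrix.of fun j k => |Jac G z j k|).mulVec v = v) →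
      ∀ z : Fin N → ℝ, specRad (Matrix.of fun j k => |Jac G z j k|) = 1 := by
    intro h3 z
    obtain ⟨v, hv0, hvnn, hveq⟩ := h3 z
    have hvpos : ∀ i, 0 < v i := by
      obtain ⟨k, hk⟩ := Function.ne_iff.mp hv0
      intro i
      exact SVSR.prop_pos (hAnn z) hveq hvnn (hAirr z k i)
        (lt_of_le_of_ne (hvnn k) (Ne.symm hk))
    have hub : ∀ r ∈ (fun z : ℂ => ‖z‖) ''
        spectrum ℂ ((Matrix.of fun j k => |Jac G z j k|).map Complex.ofReal), r ≤ 1 := by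
      rintro r ⟨μ, hμ, rfl⟩
      refine SVSR.spec_abs_le_of_subinv (hAnn z) hvpos (fun j => ?_) hμ
      rw [hveq, one_mul]
    have hmem : (1:ℝ) ∈ (fun z : ℂ => ‖z‖) ''
        spectrum ℂ ((Matrix.of fun j k => |Jac G z j k|).map Complex.ofReal) :=
      ⟨1, SVSR.one_mem_spec hv0 hveq, norm_one⟩
    show sSup _ = 1
    exact le_antisymm (csSup_le ⟨1, hmem⟩ hub) (le_csSup ⟨1, fun r hr => hub r hr⟩ hmem)
  -- (i) → (ii)
  have h12 : (∀ z : Fin N → ℝ, specRad (Matrix.of fun j k => |Jac G z j k|) = 1) →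
      ∀ z : Fin N → ℝ, (Matrix.of fun j k => |Jac G z j k|).mulVec (fun i => |u i|)
        = fun i => |u i| := by
    intro h1 z
    set A : Matrix (Fin N) (Fin N) ℝ := Matrix.of fun j k => |Jac G z j k| with hA
    set au : Fin N → ℝ := fun i => |u i| with hauv
    have hau_nn : ∀ i, 0 ≤ au i := fun i => abs_nonneg _
    have hau_ne : au ≠ 0 := by
      intro h
      apply hu
      funext i
      have := congrFun h i
      simpa [hauv, abs_eq_zero] using this
    by_contra hne
    set d : Fin N → ℝ := fun j => A.mulVec au j - au j with hd
    have hd0 : ∀ j, 0 ≤ d j := by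
      intro j
      have h2 : au j ≤ A.mulVec au j := by
        rw [hmv z au j]
        exact hsub z j
      show 0 ≤ A.mulVec au j - au j
      linarith
    have hdne : d ≠ 0 := by
      intro h
      apply hne
      funext j
      have := congrFun h j
      rw [hd] at this
      simp only [Pi.zero_apply] at this
      have h3 : A.mulVec au j = au j := by linarith
      exact h3
    obtain ⟨P, hP, hcomm⟩ := SVSR.exists_pos_comm (hAnn z) (hAirr z)
    set w : Fin N → ℝ := P.mulVec au with hw
    have hwpos : ∀ j, 0 < w j := SVSR.posMulVec hP hau_nn hau_ne
    have hPd : ∀ j, 0 < P.mulVec d j := SVSR.posMulVec hP hd0 hdne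
    have hAw : ∀ j, A.mulVec w j = w j + P.mulVec d j := by
      have h2 : A.mulVec w = P.mulVec (A.mulVec au) := by
        rw [hw, Matrix.mulVec_mulVec, hcomm, ← Matrix.mulVec_mulVec]
      have h3 : A.mulVec au = au + d := by
        funext j
        rw [hd]
        show A.mulVec au j = au j + (A.mulVec au j - au j)
        ring
      intro j
      rw [h2, h3, Matrix.mulVec_add]
      rfl
    obtain ⟨jm, -, hjm⟩ := Finset.exists_min_image Finset.univ (fun j => P.mulVec d j)
      ⟨⟨0, hN⟩, Finset.mem_univ _⟩
    obtain ⟨jM, -, hjM⟩ := Finset.exists_max_image Finset.univ w ⟨⟨0, hN⟩, Finset.mem_univ _⟩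
    set δ : ℝ := P.mulVec d jm / w jM with hδdef
    have hδ : 0 < δ := div_pos (hPd jm) (hwpos jM)
    have hkey : ∀ j, (1 + δ) * w j ≤ A.mulVec w j := by
      intro j
      have h2 : δ * w j ≤ P.mulVec d jm := by
        rw [hδdef, div_mul_eq_mul_div, div_le_iff₀ (hwpos jM)]
        exact mul_le_mul_of_nonneg_left (hjM j (Finset.mem_univ j)) (le_of_lt (hPd jm))
      have h3 : P.mulVec d jm ≤ P.mulVec d j := hjm j (Finset.mem_univ j)
      have h4 : (1 + δ) * w j = w j + δ * w j := by ring
      rw [h4, hAw j]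
      linarith
    obtain ⟨μ, hμ, hμ1⟩ := SVSR.exists_spec_gt_one hN (hAnn z) hwpos hδ hkey
    have hBdd : BddAbove ((fun z : ℂ => ‖z‖) '' spectrum ℂ (A.map Complex.ofReal)) := by
      refine ⟨∑ j, ∑ k, A j k, ?_⟩
      rintro r ⟨ν, hν, rfl⟩
      refine SVSR.spec_abs_le_of_subinv (hAnn z) (v := fun _ => (1:ℝ))
        (fun _ => one_pos) (fun j => ?_) hν
      rw [mul_one]
      calc A.mulVec (fun _ => 1) j = ∑ k, A j k := by
            simp [Matrix.mulVec, dotProduct]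
      _ ≤ ∑ j', ∑ k, A j' k :=
          Finset.single_le_sum (f := fun j' => ∑ k, A j' k)
            (fun j' _ => Finset.sum_nonneg fun k _ => hAnn z j' k) (Finset.mem_univ j)
    have hle : ‖μ‖ ≤ specRad A := le_csSup hBdd ⟨μ, hμ, rfl⟩
    rw [h1 z] at hle
    linarith
  -- (ii) → all entries of u nonzero
  have hne2 : (∀ z : Fin N → ℝ, (Matrix.of fun j k => |Jac G z j k|).mulVec (fun i => |u i|)
        = fun i => |u i|) → ∀ j, u j ≠ 0 := by
    intro h2 j hj
    obtain ⟨k, hk⟩ := Function.ne_iff.mp hu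
    have h3 : (0:ℝ) < |u j| :=
      SVSR.prop_pos (hAnn 0) (h2 0) (fun i => abs_nonneg _) (hAirr 0 k j) (abs_pos.mpr hk)
    rw [hj] at h3
    simp at h3
  -- (ii) → (iv)
  have h24 : (∀ z : Fin N → ℝ, (Matrix.of fun j k => |Jac G z j k|).mulVec (fun i => |u i|)
        = fun i => |u i|) → MonoConsistent F u := by
    intro h2
    have hne := hne2 h2
    refine ⟨fun j => decide (0 < u j), fun j hj => le_of_lt (of_decide_eq_true hj),
      fun j hj => le_of_not_gt (of_decide_eq_false hj), ?_⟩
    intro x hxmem j k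
    set z : Fin N → ℝ := clog x with hz
    have hcx : cexp z = x := SVSR.cexp_clog hxmem
    set s : Fin N → ℝ := fun i => if 0 < u i then 1 else -1 with hs
    have hsu : ∀ i, s i * u i = |u i| := by
      intro i
      by_cases h : 0 < u i
      · simp [hs, h, abs_of_pos h]
      · have h' : u i < 0 := lt_of_le_of_ne (le_of_not_gt h) (hne i)
        simp [hs, h, abs_of_neg h']
    have hss : ∀ i, s i * s i = 1 := by
      intro i; by_cases h : 0 < u i <;> simp [hs, h]
    have hsum2 : ∑ k', |Jac G z j k'| * |u k'| = |u j| := by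
      have h := congrFun (h2 z) j
      rw [hmv] at h
      exact h
    have habs : ∀ i, |s i| = 1 := by
      intro i; by_cases h : 0 < u i <;> simp [hs, h]
    have hterm : ∀ k' ∈ Finset.univ, s j * (Jac G z j k' * u k') ≤ |Jac G z j k'| * |u k'| := by
      intro k' _
      calc s j * (Jac G z j k' * u k') ≤ |s j * (Jac G z j k' * u k')| := le_abs_self _
      _ = |Jac G z j k'| * |u k'| := by
          rw [abs_mul, habs j, one_mul, abs_mul]
    have hsumeq : ∑ k', s j * (Jac G z j k' * u k') = ∑ k', |Jac G z j k'| * |u k'| := by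
      rw [hsum2, ← Finset.mul_sum, hmulj z j, hsu j]
    have heqterm := (Finset.sum_eq_sum_iff_of_le hterm).mp hsumeq k (Finset.mem_univ k)
    -- heqterm : s j * (Jac G z j k * u k) = |Jac G z j k| * |u k|
    have h6 : (s j * Jac G z j k - |Jac G z j k| * s k) * u k = 0 := by
      have h7 : |u k| = s k * u k := (hsu k).symm
      rw [h7] at heqterm
      nlinarith [heqterm]
    have h7 : s j * Jac G z j k = |Jac G z j k| * s k := by
      rcases mul_eq_zero.mp h6 with h | h
      · linarith
      · exact absurd h (hne k)
    have h8 : Jac G z j k = s j * s k * |Jac G z j k| := by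
      have h9 : s j * (s j * Jac G z j k) = s j * (|Jac G z j k| * s k) := by rw [h7]
      calc Jac G z j k = s j * s j * Jac G z j k := by rw [hss j, one_mul]
      _ = s j * (s j * Jac G z j k) := by ring
      _ = s j * (|Jac G z j k| * s k) := h9
      _ = s j * s k * |Jac G z j k| := by ring
    have hJG : Jac G z j k = Real.exp (z k) / F x j * Jac F x j k := by
      have h10 := hform z j k
      rw [hcx] at h10
      exact h10
    have hppos' : 0 < Real.exp (z k) / F x j := div_pos (Real.exp_pos _) (hmap x hxmem j)
    constructor
    · intro hζ
      have hiff : (0 < u j) ↔ (0 < u k) := decide_eq_decide.mp hζ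
      have hsjk : s j = s k := by
        by_cases h : 0 < u j
        · rw [hs]
          simp only []
          rw [if_pos h, if_pos (hiff.mp h)]
        · have h' : ¬ 0 < u k := fun hk => h (hiff.mpr hk)
          rw [hs]
          simp only []
          rw [if_neg h, if_neg h']
      have h11 : 0 ≤ Jac G z j k := by
        rw [h8, hsjk, hss k, one_mul]
        exact abs_nonneg _
      rw [hJG] at h11
      exact (mul_nonneg_iff_of_pos_left hppos').mp h11
    · intro hζ
      have hiff : ¬((0 < u j) ↔ (0 < u k)) := fun hif => hζ (decide_eq_decide.mpr hif)
      have hsjk : s j * s k = -1 := by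
        by_cases h : 0 < u j
        · have h' : ¬ 0 < u k := fun hk => hiff ⟨fun _ => hk, fun _ => h⟩
          rw [hs]
          simp only []
          rw [if_pos h, if_neg h']
          norm_num
        · have h' : 0 < u k := by
            by_contra h'
            exact hiff (iff_of_false h h')
          rw [hs]
          simp only []
          rw [if_neg h, if_pos h']
          norm_num
      have h11 : Jac G z j k ≤ 0 := by
        rw [h8, hsjk]
        have := abs_nonneg (Jac G z j k)
        linarith
      rw [hJG] at h11
      by_contra h12
      push_neg at h12
      nlinarith
  constructor
  · tfae_have 4 → 2 := h42
    tfae_have 2 → 3 := h23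
    tfae_have 3 → 1 := h31
    tfae_have 1 → 2 := h12
    tfae_have 2 → 4 := h24
    tfae_finish
  · exact fun h4 => hne2 (h42 h4)
end
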